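/- arXiv:math/0404029 — 7 statements merged into one kernel-verified Lean document; each statement's English description precedes it below -/
import Mathlib

section
/- Let B be a G-cograded Hopf algebra and π an admissible action of G on B with associated action ρ on G. Define the deformed comultiplication Δ̃ by Δ̃(b)(1 ⊗ b') = (π_{q⁻¹} ⊗ ι)(Δ(b)(1 ⊗ b')) for b' ∈ B_q. Then Δ̃ is coassociative: (Δ̃ ⊗ ι)∘Δ̃ = (ι ⊗ Δ̃)∘Δ̃ (in the appropriate multiplier sense; in the finite-dimensional case as an equality of maps B → B⊗B⊗B). -/
open TensorProduct

/-- The subspace of `B ⊗ B` spanned by tensors `x ⊗ y` with `x ∈ P`, `y ∈ Q`. -/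
noncomputable def tensorSub {B : Type*} [Ring B] [Algebra ℂ B]
    (P Q : Submodule ℂ B) : Submodule ℂ (B ⊗[ℂ] B) :=
  Submodule.span ℂ {z | ∃ x ∈ P, ∃ y ∈ Q, z = x ⊗ₜ[ℂ] y}

private lemma tpmap_eq_algmap {A B C D : Type*} [Ring A] [Ring B] [Ring C] [Ring D]
    [Algebra ℂ A] [Algebra ℂ B] [Algebra ℂ C] [Algebra ℂ D]
    (f : A →ₐ[ℂ] B) (g : C →ₐ[ℂ] D) :
    TensorProduct.map f.toLinearMap g.toLinearMap
      = (Algebra.TensorProduct.map f g).toLinearMap := by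
  apply TensorProduct.ext'
  intro x y
  rfl

private lemma tpmap_mul {A B C D : Type*} [Ring A] [Ring B] [Ring C] [Ring D]
    [Algebra ℂ A] [Algebra ℂ B] [Algebra ℂ C] [Algebra ℂ D]
    (f : A →ₐ[ℂ] B) (g : C →ₐ[ℂ] D) (x y : A ⊗[ℂ] C) :
    TensorProduct.map f.toLinearMap g.toLinearMap (x * y)
      = TensorProduct.map f.toLinearMap g.toLinearMap x
        * TensorProduct.map f.toLinearMap g.toLinearMap y := by
  rw [tpmap_eq_algmap]
  exact map_mul (Algebra.TensorProduct.map f g) x y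

private lemma assoc_mapaux {B : Type*} [Ring B] [Algebra ℂ B]
    (f g : B →ₗ[ℂ] B) (y : B) (W : B ⊗[ℂ] B) :
    (TensorProduct.assoc ℂ B B B) ((TensorProduct.map f g W) ⊗ₜ[ℂ] y)
      = (TensorProduct.map f (TensorProduct.map g LinearMap.id))
          ((TensorProduct.assoc ℂ B B B) (W ⊗ₜ[ℂ] y)) := by
  induction W using TensorProduct.induction_on with
  | zero =>
      rw [LinearMap.map_zero, zero_tmul, LinearEquiv.map_zero, LinearMap.map_zero]
  | tmul a b => simp only [TensorProduct.map_tmul, TensorProduct.assoc_tmul,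
      LinearMap.id_coe, id_eq]
  | add u v hu hv => rw [LinearMap.map_add, add_tmul, add_tmul, LinearEquiv.map_add,
      LinearEquiv.map_add, LinearMap.map_add, hu, hv]

private lemma map_collapse {B : Type*} [Ring B] [Algebra ℂ B]
    (f g h : B →ₗ[ℂ] B) (w : B ⊗[ℂ] B) :
    (TensorProduct.map f LinearMap.id) ((TensorProduct.map g h) w)
      = (TensorProduct.map (f ∘ₗ g) h) w := by
  have : TensorProduct.map (f ∘ₗ g) (LinearMap.id ∘ₗ h)
      = TensorProduct.map f LinearMap.id ∘ₗ TensorProduct.map g h :=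
    TensorProduct.map_comp f LinearMap.id g h
  rw [LinearMap.id_comp] at this
  rw [this]; rfl

set_option maxHeartbeats 1000000 in
/-- Let `B = ⊕_p B_p` be a `G`-cograded Hopf algebra and `π` an
admissible action of `G` on `B` (each `π_p` an algebra automorphism respecting `Δ`,
with `π_p(B_q) = B_{ρ_p(q)}` and `π_{ρ_p(q)} = π_{pqp⁻¹}`).  The deformed
comultiplication `Δ̃`, determined by `Δ̃(b)(1 ⊗ b') = (π_{q⁻¹} ⊗ ι)(Δ(b)(1 ⊗ b'))`
for `b' ∈ B_q`, is coassociative. -/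
theorem deformed_comultiplication_coassociative
    {G : Type*} [Group G] [DecidableEq G] {B : Type*} [Ring B] [HopfAlgebra ℂ B]
    (ℬ : G → Submodule ℂ B)
    (hdec : DirectSum.IsInternal ℬ)
    (horth : ∀ p q : G, p ≠ q → ∀ a ∈ ℬ p, ∀ b ∈ ℬ q, a * b = 0)
    (hcograded₁ : ∀ p q : G,
      Submodule.span ℂ {z | ∃ a ∈ ℬ (p * q), ∃ b ∈ ℬ q,
        z = (Coalgebra.comul (R := ℂ) a) * (1 ⊗ₜ[ℂ] b)} = tensorSub (ℬ p) (ℬ q))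
    (hcograded₂ : ∀ p q : G,
      Submodule.span ℂ {z | ∃ a ∈ ℬ (p * q), ∃ b ∈ ℬ p,
        z = (b ⊗ₜ[ℂ] 1) * (Coalgebra.comul (R := ℂ) a)} = tensorSub (ℬ p) (ℬ q))
    -- the admissible action
    (π : G →* (B ≃ₐ[ℂ] B)) (ρ : G → G → G)
    (hπΔ : ∀ (p : G) (b : B), Coalgebra.comul (R := ℂ) (π p b) =
      (TensorProduct.map (π p).toLinearMap (π p).toLinearMap) (Coalgebra.comul (R := ℂ) b))
    (hπℬ : ∀ p q : G, (ℬ q).map (π p).toLinearMap = ℬ (ρ p q))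
    (hπρ : ∀ p q : G, π (ρ p q) = π (p * q * p⁻¹))
    -- the deformed comultiplication
    (Δt : B →ₗ[ℂ] B ⊗[ℂ] B)
    (hΔt : ∀ (b : B) (q : G), ∀ b' ∈ ℬ q,
      Δt b * (1 ⊗ₜ[ℂ] b') = (TensorProduct.map (π q⁻¹).toLinearMap LinearMap.id)
        (Coalgebra.comul (R := ℂ) b * (1 ⊗ₜ[ℂ] b'))) :
    (TensorProduct.assoc ℂ B B B).toLinearMap ∘ₗ (TensorProduct.map Δt LinearMap.id) ∘ₗ Δt
      = (TensorProduct.map LinearMap.id Δt) ∘ₗ Δt := by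
  classical
  -- the components of 1
  obtain ⟨e, he, hesum⟩ := (Submodule.mem_iSup_iff_exists_finsupp ℬ (1 : B)).mp
    (by rw [hdec.submodule_iSup_eq_top]; trivial)
  set S : Finset G := e.support with hS
  have hsum1 : ∑ q ∈ S, e q = 1 := hesum
  have he0 : ∀ q : G, q ∉ S → e q = 0 := fun q hq => Finsupp.notMem_support_iff.mp hq
  -- right and left multiplication by the components of 1
  have hre0 : ∀ p q : G, p ≠ q → ∀ x ∈ ℬ p, x * e q = 0 :=
    fun p q hpq x hx => horth p q hpq x hx (e q) (he q)
  have hle0 : ∀ p q : G, p ≠ q → ∀ x ∈ ℬ q, e p * x = 0 :=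
    fun p q hpq x hx => horth p q hpq (e p) (he p) x hx
  have hre : ∀ p : G, ∀ x ∈ ℬ p, x * e p = x := by
    intro p x hx
    have h1 : x = ∑ q ∈ S, x * e q := by rw [← Finset.mul_sum, hsum1, mul_one]
    have h2 : ∀ q ∈ S, x * e q = if q = p then x * e p else 0 := by
      intro q _
      by_cases hqp : q = p
      · rw [if_pos hqp, hqp]
      · rw [if_neg hqp]; exact hre0 p q (fun h => hqp h.symm) x hx
    rw [Finset.sum_congr rfl h2, Finset.sum_ite_eq' S p (fun _ => x * e p)] at h1
    by_cases hp : p ∈ S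
    · rw [if_pos hp] at h1; exact h1.symm
    · rw [if_neg hp] at h1; rw [h1, zero_mul]
  have hle : ∀ p : G, ∀ x ∈ ℬ p, e p * x = x := by
    intro p x hx
    have h1 : x = ∑ q ∈ S, e q * x := by rw [← Finset.sum_mul, hsum1, one_mul]
    have h2 : ∀ q ∈ S, e q * x = if q = p then e p * x else 0 := by
      intro q _
      by_cases hqp : q = p
      · rw [if_pos hqp, hqp]
      · rw [if_neg hqp]; exact hle0 q p hqp x hx
    rw [Finset.sum_congr rfl h2, Finset.sum_ite_eq' S p (fun _ => e p * x)] at h1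
    by_cases hp : p ∈ S
    · rw [if_pos hp] at h1; exact h1.symm
    · rw [if_neg hp] at h1; rw [h1, mul_zero]
  have hBzero : ∀ q : G, e q = 0 → ∀ x ∈ ℬ q, x = 0 := by
    intro q hq x hx
    rw [← hre q x hx, hq, mul_zero]
  have hdisj : ∀ a b : G, a ≠ b → ∀ x, x ∈ ℬ a → x ∈ ℬ b → x = 0 := by
    intro a b hab x hxa hxb
    rw [← hre a x hxa]
    exact hre0 b a (fun h => hab h.symm) x hxb
  -- the action and the components of 1
  have hπmem : ∀ t u : G, ∀ x ∈ ℬ u, π t x ∈ ℬ (ρ t u) := by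
    intro t u x hx
    rw [← hπℬ t u]
    exact ⟨x, hx, rfl⟩
  have hππ : ∀ (t : G) (x : B), π t⁻¹ (π t x) = x := by
    intro t x
    rw [← AlgEquiv.mul_apply, ← map_mul, inv_mul_cancel, map_one, AlgEquiv.one_apply]
  have hππ' : ∀ (t : G) (x : B), π t (π t⁻¹ x) = x := by
    intro t x
    rw [← AlgEquiv.mul_apply, ← map_mul, mul_inv_cancel, map_one, AlgEquiv.one_apply]
  have hπe : ∀ t u : G, π t (e u) = e (ρ t u) := by
    intro t u
    by_cases hu : e u = 0
    · rw [hu, map_zero]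
      have hmem : e (ρ t u) ∈ (ℬ u).map (π t).toLinearMap := by rw [hπℬ]; exact he _
      obtain ⟨x, hx, hxe⟩ := hmem
      rw [← hxe, hBzero u hu x hx, map_zero]
    · have h1 : (1 : B) = ∑ u' ∈ S, π t (e u') := by
        rw [← map_sum, hsum1, map_one]
      have h2 : e (ρ t u) = ∑ u' ∈ S, e (ρ t u) * π t (e u') := by
        rw [← Finset.mul_sum, ← h1, mul_one]
      have hterm : ∀ u' ∈ S, u' ≠ u → e (ρ t u) * π t (e u') = 0 := by
        intro u' _ hne
        by_cases hρu : ρ t u' = ρ t u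
        · have hBu : ℬ u' = ℬ u := by
            have h3 := hπℬ t u'
            rw [hρu, ← hπℬ t u] at h3
            exact Submodule.map_injective_of_injective
              ((π t).injective : Function.Injective ((π t).toLinearMap)) h3
          have h4 : e u' = 0 := hdisj u' u hne (e u') (he u') (hBu ▸ he u')
          rw [h4, map_zero, mul_zero]
        · exact hle0 (ρ t u) (ρ t u') (Ne.symm hρu) _ (hπmem t u' _ (he u'))
      rw [h2, Finset.sum_eq_single_of_mem u (Finsupp.mem_support_iff.mpr hu) hterm]
      exact (hle (ρ t u) _ (hπmem t u _ (he u))).symm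
  -- cutting an element of B ⊗ B with the components of 1
  have hcut : ∀ z : B ⊗[ℂ] B, z = ∑ q ∈ S, z * ((1 : B) ⊗ₜ[ℂ] e q) := by
    intro z
    rw [← Finset.mul_sum, ← TensorProduct.tmul_sum, hsum1,
      ← Algebra.TensorProduct.one_def, mul_one]
  -- the cut formula for Δt
  have hΔtcut : ∀ x : B, Δt x = ∑ q ∈ S,
      (TensorProduct.map (π q⁻¹).toLinearMap LinearMap.id)
        ((Coalgebra.comul (R := ℂ) x) * ((1 : B) ⊗ₜ[ℂ] e q)) := by
    intro x
    rw [hcut (Δt x)]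
    exact Finset.sum_congr rfl fun q _ => hΔt x q (e q) (he q)
  -- membership for cut comultiplications
  have hcutmem : ∀ (r q : G) (x : B), x ∈ ℬ r →
      (Coalgebra.comul (R := ℂ) x) * ((1 : B) ⊗ₜ[ℂ] e q) ∈ tensorSub (ℬ (r * q⁻¹)) (ℬ q) := by
    intro r q x hx
    rw [← hcograded₁ (r * q⁻¹) q]
    apply Submodule.subset_span
    exact ⟨x, by rwa [inv_mul_cancel_right], e q, he q, rfl⟩
  -- projecting the first leg
  have hproj : ∀ (p a : G) (Q : Submodule ℂ B), ∀ z ∈ tensorSub (ℬ a) Q,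
      ((e p) ⊗ₜ[ℂ] (1 : B)) * z = if p = a then z else 0 := by
    intro p a Q z hz
    induction hz using Submodule.span_induction with
    | mem z hzmem =>
        obtain ⟨x, hx, y, _, rfl⟩ := hzmem
        rw [Algebra.TensorProduct.tmul_mul_tmul, one_mul]
        by_cases hpa : p = a
        · rw [if_pos hpa, hpa, hle a x hx]
        · rw [if_neg hpa, hle0 p a hpa x hx, zero_tmul]
    | zero => rw [mul_zero]; split <;> rfl
    | add u v hu hv hu' hv' =>
        rw [mul_add, hu', hv']
        split <;> simp
    | smul c u hu hu' =>
        rw [Algebra.mul_smul_comm, hu']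
        split <;> simp
  -- the key computation of Δ(e_{pq})(1 ⊗ e_q)
  have hΔe : ∀ p q : G,
      (Coalgebra.comul (R := ℂ) (e (p * q))) * ((1 : B) ⊗ₜ[ℂ] e q)
        = (e p) ⊗ₜ[ℂ] (e q) := by
    intro p q
    symm
    have h1 : (e p) ⊗ₜ[ℂ] (e q) = ((e p) ⊗ₜ[ℂ] (1 : B)) * ((1 : B) ⊗ₜ[ℂ] e q) := by
      rw [Algebra.TensorProduct.tmul_mul_tmul, mul_one, one_mul]
    have h2 : ((1 : B) ⊗ₜ[ℂ] e q)
        = ∑ s ∈ S, (Coalgebra.comul (R := ℂ) (e s)) * ((1 : B) ⊗ₜ[ℂ] e q) := by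
      rw [← Finset.sum_mul, ← map_sum, hsum1, Bialgebra.comul_one, one_mul]
    conv_lhs => rw [h1, h2, Finset.mul_sum]
    have hterm : ∀ s ∈ S,
        ((e p) ⊗ₜ[ℂ] (1 : B)) * ((Coalgebra.comul (R := ℂ) (e s)) * ((1 : B) ⊗ₜ[ℂ] e q))
          = if s = p * q then (Coalgebra.comul (R := ℂ) (e s)) * ((1 : B) ⊗ₜ[ℂ] e q) else 0 := by
      intro s _
      rw [hproj p (s * q⁻¹) (ℬ q) _ (hcutmem s q (e s) (he s))]
      have hiff : (p = s * q⁻¹) = (s = p * q) := by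
        apply propext
        constructor
        · rintro rfl; rw [inv_mul_cancel_right]
        · rintro rfl; rw [mul_inv_cancel_right]
      simp only [hiff]
    rw [Finset.sum_congr rfl hterm,
      Finset.sum_ite_eq' S (p * q) (fun s => (Coalgebra.comul (R := ℂ) (e s)) * ((1 : B) ⊗ₜ[ℂ] e q))]
    by_cases hpq : p * q ∈ S
    · rw [if_pos hpq]
    · rw [if_neg hpq, he0 _ hpq, map_zero, zero_mul]
  -- multiplicativity helpers
  have hmul_idΔ : ∀ x y : B ⊗[ℂ] B,
      (TensorProduct.map (LinearMap.id : B →ₗ[ℂ] B) (Coalgebra.comul (R := ℂ))) (x * y)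
        = (TensorProduct.map LinearMap.id (Coalgebra.comul (R := ℂ))) x
          * (TensorProduct.map LinearMap.id (Coalgebra.comul (R := ℂ))) y :=
    fun x y => tpmap_mul (AlgHom.id ℂ B) (Bialgebra.comulAlgHom ℂ B) x y
  have hmul_Δid : ∀ x y : B ⊗[ℂ] B,
      (TensorProduct.map (Coalgebra.comul (R := ℂ)) (LinearMap.id : B →ₗ[ℂ] B)) (x * y)
        = (TensorProduct.map (Coalgebra.comul (R := ℂ)) LinearMap.id) x
          * (TensorProduct.map (Coalgebra.comul (R := ℂ)) LinearMap.id) y :=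
    fun x y => tpmap_mul (Bialgebra.comulAlgHom ℂ B) (AlgHom.id ℂ B) x y
  have hmul_ππ : ∀ (σ τ : B ≃ₐ[ℂ] B) (x y : B ⊗[ℂ] B),
      (TensorProduct.map σ.toLinearMap τ.toLinearMap) (x * y)
        = (TensorProduct.map σ.toLinearMap τ.toLinearMap) x
          * (TensorProduct.map σ.toLinearMap τ.toLinearMap) y :=
    fun σ τ x y => tpmap_mul σ.toAlgHom τ.toAlgHom x y
  have hassoc_mul : ∀ x y : (B ⊗[ℂ] B) ⊗[ℂ] B,
      (TensorProduct.assoc ℂ B B B) (x * y)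
        = (TensorProduct.assoc ℂ B B B) x * (TensorProduct.assoc ℂ B B B) y :=
    fun x y => map_mul (Algebra.TensorProduct.assoc ℂ ℂ ℂ B B B) x y
  have hπcomp : ∀ (a c : G) (h : B →ₗ[ℂ] B) (w : B ⊗[ℂ] B),
      (TensorProduct.map (π a).toLinearMap LinearMap.id)
        ((TensorProduct.map (π c).toLinearMap h) w)
      = (TensorProduct.map (π (a * c)).toLinearMap h) w := by
    intro a c h w
    have hπLMcomp : (π a).toLinearMap ∘ₗ (π c).toLinearMap = (π (a * c)).toLinearMap := by
      apply LinearMap.ext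
      intro x
      simp only [LinearMap.comp_apply, AlgEquiv.toLinearMap_apply]
      rw [← AlgEquiv.mul_apply, ← map_mul]
    rw [map_collapse, hπLMcomp]
  -- claim 2 : the right-hand side computation
  have claim2 : ∀ (t : G) (z : B ⊗[ℂ] B),
      (TensorProduct.map LinearMap.id Δt)
          ((TensorProduct.map (π t⁻¹).toLinearMap LinearMap.id) z)
        = ∑ q ∈ S, (TensorProduct.map (π t⁻¹).toLinearMap
            (TensorProduct.map (π q⁻¹).toLinearMap LinearMap.id))
            (((TensorProduct.map LinearMap.id (Coalgebra.comul (R := ℂ))) z)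
              * ((1 : B) ⊗ₜ[ℂ] ((1 : B) ⊗ₜ[ℂ] e q))) := by
    intro t z
    induction z using TensorProduct.induction_on with
    | zero =>
        simp only [LinearMap.map_zero, zero_mul, Finset.sum_const_zero]
    | tmul x y =>
        simp only [TensorProduct.map_tmul, LinearMap.id_coe, id_eq,
          Algebra.TensorProduct.tmul_mul_tmul, mul_one]
        rw [hΔtcut y, TensorProduct.tmul_sum]
    | add u v hu hv =>
        simp only [LinearMap.map_add, add_mul]
        rw [hu, hv, ← Finset.sum_add_distrib]
  -- the twisted cut formula
  have hπΔcut : ∀ (t u : G) (x : B),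
      (TensorProduct.map (π u⁻¹).toLinearMap LinearMap.id)
        (Coalgebra.comul (R := ℂ) ((π t⁻¹) x) * ((1 : B) ⊗ₜ[ℂ] e u))
      = (TensorProduct.map (π (t * u)⁻¹).toLinearMap (π t⁻¹).toLinearMap)
          (Coalgebra.comul (R := ℂ) x * ((1 : B) ⊗ₜ[ℂ] e (ρ t u))) := by
    intro t u x
    have h1 : (TensorProduct.map (π t⁻¹).toLinearMap (π t⁻¹).toLinearMap)
        (Coalgebra.comul (R := ℂ) x * ((1 : B) ⊗ₜ[ℂ] e (ρ t u)))
        = (TensorProduct.map (π t⁻¹).toLinearMap (π t⁻¹).toLinearMap)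
            (Coalgebra.comul (R := ℂ) x) * ((1 : B) ⊗ₜ[ℂ] e u) := by
      rw [hmul_ππ, TensorProduct.map_tmul]
      have h2 : ((π t⁻¹).toLinearMap (1 : B)) ⊗ₜ[ℂ] ((π t⁻¹).toLinearMap (e (ρ t u)))
          = (1 : B) ⊗ₜ[ℂ] e u := by
        rw [AlgEquiv.toLinearMap_apply, AlgEquiv.toLinearMap_apply, map_one,
          ← hπe t u, hππ]
      rw [h2]
    rw [hπΔ t⁻¹ x, ← h1, mul_inv_rev, hπcomp]
  -- claim 1 : the left-hand side computation
  have claim1 : ∀ (t : G) (z : B ⊗[ℂ] B),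
      (TensorProduct.assoc ℂ B B B) ((TensorProduct.map Δt LinearMap.id)
        ((TensorProduct.map (π t⁻¹).toLinearMap LinearMap.id) z))
      = ∑ u ∈ S, (TensorProduct.map (π (t * u)⁻¹).toLinearMap
          (TensorProduct.map (π t⁻¹).toLinearMap LinearMap.id))
          ((TensorProduct.assoc ℂ B B B)
            (((TensorProduct.map (Coalgebra.comul (R := ℂ)) LinearMap.id) z)
              * (((1 : B) ⊗ₜ[ℂ] e (ρ t u)) ⊗ₜ[ℂ] (1 : B)))) := by
    intro t z
    induction z using TensorProduct.induction_on with
    | zero =>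
        simp only [LinearMap.map_zero, zero_mul, LinearEquiv.map_zero,
          Finset.sum_const_zero]
    | tmul x y =>
        rw [TensorProduct.map_tmul, TensorProduct.map_tmul]
        have hx : Δt ((π t⁻¹).toLinearMap x) = ∑ u ∈ S,
            (TensorProduct.map (π (t * u)⁻¹).toLinearMap (π t⁻¹).toLinearMap)
              (Coalgebra.comul (R := ℂ) x * ((1 : B) ⊗ₜ[ℂ] e (ρ t u))) := by
          rw [AlgEquiv.toLinearMap_apply, hΔtcut ((π t⁻¹) x)]
          exact Finset.sum_congr rfl fun u _ => hπΔcut t u x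
        rw [hx, TensorProduct.sum_tmul, map_sum]
        apply Finset.sum_congr rfl
        intro u _
        rw [assoc_mapaux]
        congr 1
        rw [TensorProduct.map_tmul]
        rw [Algebra.TensorProduct.tmul_mul_tmul]
        simp only [LinearMap.id_coe, id_eq, mul_one]
    | add u v hu hv =>
        simp only [LinearMap.map_add, add_mul, LinearEquiv.map_add]
        rw [hu, hv, ← Finset.sum_add_distrib]
  -- now prove the equality of maps pointwise
  apply LinearMap.ext
  intro b
  simp only [LinearMap.comp_apply, LinearEquiv.coe_coe]
  have hN : (TensorProduct.assoc ℂ B B B)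
      ((TensorProduct.map (Coalgebra.comul (R := ℂ)) LinearMap.id)
        (Coalgebra.comul (R := ℂ) b)) = ((TensorProduct.map LinearMap.id (Coalgebra.comul (R := ℂ))) (Coalgebra.comul (R := ℂ) b)) :=
    Coalgebra.coassoc_apply b
  -- the right-hand side
  have keyR : (TensorProduct.map LinearMap.id Δt) (Δt b)
      = ∑ t ∈ S, ∑ q ∈ S, (TensorProduct.map (π t⁻¹).toLinearMap
          (TensorProduct.map (π q⁻¹).toLinearMap LinearMap.id))
          (((TensorProduct.map LinearMap.id (Coalgebra.comul (R := ℂ))) (Coalgebra.comul (R := ℂ) b)) * ((1 : B) ⊗ₜ[ℂ] (e (t * q⁻¹) ⊗ₜ[ℂ] e q))) := by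
    rw [hΔtcut b, map_sum]
    apply Finset.sum_congr rfl
    intro t _
    rw [claim2 t]
    apply Finset.sum_congr rfl
    intro q _
    congr 1
    rw [hmul_idΔ, TensorProduct.map_tmul]
    simp only [LinearMap.id_coe, id_eq]
    rw [mul_assoc, Algebra.TensorProduct.tmul_mul_tmul, one_mul]
    have h3 := hΔe (t * q⁻¹) q
    rw [inv_mul_cancel_right] at h3
    rw [h3]
  -- the left-hand side
  have keyL : (TensorProduct.assoc ℂ B B B) ((TensorProduct.map Δt LinearMap.id) (Δt b))
      = ∑ t ∈ S, ∑ u ∈ S, (TensorProduct.map (π (t * u)⁻¹).toLinearMap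
          (TensorProduct.map (π t⁻¹).toLinearMap LinearMap.id))
          (((TensorProduct.map LinearMap.id (Coalgebra.comul (R := ℂ))) (Coalgebra.comul (R := ℂ) b)) * ((1 : B) ⊗ₜ[ℂ] (e (ρ t u) ⊗ₜ[ℂ] e t))) := by
    rw [hΔtcut b, map_sum, map_sum]
    apply Finset.sum_congr rfl
    intro t _
    rw [claim1 t]
    apply Finset.sum_congr rfl
    intro u _
    congr 1
    rw [hmul_Δid, TensorProduct.map_tmul, Bialgebra.comul_one]
    simp only [LinearMap.id_coe, id_eq]
    rw [mul_assoc, Algebra.TensorProduct.tmul_mul_tmul, one_mul, mul_one,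
      hassoc_mul, hN, TensorProduct.assoc_tmul]
  rw [keyR, keyL]
  -- match the two double sums
  conv_rhs => rw [Finset.sum_comm]
  apply Finset.sum_congr rfl
  intro t _
  -- the common function of p
  have hf0 : ∀ p : G, e p = 0 → ((TensorProduct.map (π (p * t)⁻¹).toLinearMap (TensorProduct.map (π t⁻¹).toLinearMap LinearMap.id)) (((TensorProduct.map LinearMap.id (Coalgebra.comul (R := ℂ))) (Coalgebra.comul (R := ℂ) b)) * ((1 : B) ⊗ₜ[ℂ] (e (p) ⊗ₜ[ℂ] e t)))) = 0 := by
    intro p hp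
    rw [hp, TensorProduct.zero_tmul, TensorProduct.tmul_zero, mul_zero, map_zero]
  have hf0' : ∀ p : G, e (p * t) = 0 → ((TensorProduct.map (π (p * t)⁻¹).toLinearMap (TensorProduct.map (π t⁻¹).toLinearMap LinearMap.id)) (((TensorProduct.map LinearMap.id (Coalgebra.comul (R := ℂ))) (Coalgebra.comul (R := ℂ) b)) * ((1 : B) ⊗ₜ[ℂ] (e (p) ⊗ₜ[ℂ] e t)))) = 0 := by
    intro p hp
    have h4 : e p ⊗ₜ[ℂ] e t = 0 := by rw [← hΔe p t, hp, map_zero, zero_mul]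
    rw [h4, TensorProduct.tmul_zero, mul_zero, map_zero]
  -- the left sum is the sum of f over ρ t
  have hLf : ∀ u : G,
      (TensorProduct.map (π (t * u)⁻¹).toLinearMap
        (TensorProduct.map (π t⁻¹).toLinearMap LinearMap.id))
        (((TensorProduct.map LinearMap.id (Coalgebra.comul (R := ℂ))) (Coalgebra.comul (R := ℂ) b)) * ((1 : B) ⊗ₜ[ℂ] (e (ρ t u) ⊗ₜ[ℂ] e t))) = ((TensorProduct.map (π (ρ t u * t)⁻¹).toLinearMap (TensorProduct.map (π t⁻¹).toLinearMap LinearMap.id)) (((TensorProduct.map LinearMap.id (Coalgebra.comul (R := ℂ))) (Coalgebra.comul (R := ℂ) b)) * ((1 : B) ⊗ₜ[ℂ] (e (ρ t u) ⊗ₜ[ℂ] e t)))) := by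
    intro u
    have hπmul : π ((ρ t u) * t) = π (t * u) := by
      rw [map_mul, hπρ, ← map_mul, inv_mul_cancel_right]
    have hπeq : π ((ρ t u) * t)⁻¹ = π (t * u)⁻¹ := by
      rw [map_inv, map_inv, hπmul]
    rw [hπeq]
  have hRf : ∀ s : G,
      (TensorProduct.map (π s⁻¹).toLinearMap
        (TensorProduct.map (π t⁻¹).toLinearMap LinearMap.id))
        (((TensorProduct.map LinearMap.id (Coalgebra.comul (R := ℂ))) (Coalgebra.comul (R := ℂ) b)) * ((1 : B) ⊗ₜ[ℂ] (e (s * t⁻¹) ⊗ₜ[ℂ] e t))) = ((TensorProduct.map (π (s * t⁻¹ * t)⁻¹).toLinearMap (TensorProduct.map (π t⁻¹).toLinearMap LinearMap.id)) (((TensorProduct.map LinearMap.id (Coalgebra.comul (R := ℂ))) (Coalgebra.comul (R := ℂ) b)) * ((1 : B) ⊗ₜ[ℂ] (e (s * t⁻¹) ⊗ₜ[ℂ] e t)))) := by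
    intro s
    rw [inv_mul_cancel_right]
  rw [Finset.sum_congr rfl (fun u _ => hLf u), Finset.sum_congr rfl (fun s _ => hRf s)]
  -- supports
  have hsub1 : Function.support (fun u : G => ((TensorProduct.map (π (ρ t u * t)⁻¹).toLinearMap (TensorProduct.map (π t⁻¹).toLinearMap LinearMap.id)) (((TensorProduct.map LinearMap.id (Coalgebra.comul (R := ℂ))) (Coalgebra.comul (R := ℂ) b)) * ((1 : B) ⊗ₜ[ℂ] (e (ρ t u) ⊗ₜ[ℂ] e t))))) ⊆ ↑S := by
    intro u hu
    have hu' : ((TensorProduct.map (π (ρ t u * t)⁻¹).toLinearMap (TensorProduct.map (π t⁻¹).toLinearMap LinearMap.id)) (((TensorProduct.map LinearMap.id (Coalgebra.comul (R := ℂ))) (Coalgebra.comul (R := ℂ) b)) * ((1 : B) ⊗ₜ[ℂ] (e (ρ t u) ⊗ₜ[ℂ] e t)))) ≠ 0 := hu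
    by_contra hus
    apply hu'
    apply hf0
    rw [← hπe, he0 u hus, map_zero]
  have hsub2 : Function.support (fun s : G => ((TensorProduct.map (π (s * t⁻¹ * t)⁻¹).toLinearMap (TensorProduct.map (π t⁻¹).toLinearMap LinearMap.id)) (((TensorProduct.map LinearMap.id (Coalgebra.comul (R := ℂ))) (Coalgebra.comul (R := ℂ) b)) * ((1 : B) ⊗ₜ[ℂ] (e (s * t⁻¹) ⊗ₜ[ℂ] e t))))) ⊆ ↑S := by
    intro s hs
    have hs' : ((TensorProduct.map (π (s * t⁻¹ * t)⁻¹).toLinearMap (TensorProduct.map (π t⁻¹).toLinearMap LinearMap.id)) (((TensorProduct.map LinearMap.id (Coalgebra.comul (R := ℂ))) (Coalgebra.comul (R := ℂ) b)) * ((1 : B) ⊗ₜ[ℂ] (e (s * t⁻¹) ⊗ₜ[ℂ] e t)))) ≠ 0 := hs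
    by_contra hss
    apply hs'
    apply hf0'
    rw [inv_mul_cancel_right]
    exact he0 s hss
  -- the bijection on supports
  have hbij : Set.BijOn (ρ t) (Function.support (fun u : G => ((TensorProduct.map (π (ρ t u * t)⁻¹).toLinearMap (TensorProduct.map (π t⁻¹).toLinearMap LinearMap.id)) (((TensorProduct.map LinearMap.id (Coalgebra.comul (R := ℂ))) (Coalgebra.comul (R := ℂ) b)) * ((1 : B) ⊗ₜ[ℂ] (e (ρ t u) ⊗ₜ[ℂ] e t))))))
      (Function.support (fun p : G => ((TensorProduct.map (π (p * t)⁻¹).toLinearMap (TensorProduct.map (π t⁻¹).toLinearMap LinearMap.id)) (((TensorProduct.map LinearMap.id (Coalgebra.comul (R := ℂ))) (Coalgebra.comul (R := ℂ) b)) * ((1 : B) ⊗ₜ[ℂ] (e (p) ⊗ₜ[ℂ] e t)))))) := by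
    refine ⟨fun u hu => hu, ?_, ?_⟩
    · intro u hu u' hu' heq
      have heu : e (ρ t u) ≠ 0 := fun h => hu (hf0 _ h)
      have heq2 : e u = e u' := by
        apply (π t).injective
        rw [hπe, hπe, heq]
      by_contra hne
      have h7 : e u = 0 := hdisj u u' hne (e u) (he u) (heq2 ▸ he u')
      exact heu (by rw [← hπe, h7, map_zero])
    · intro p hp
      have hep : e p ≠ 0 := fun h => hp (hf0 _ h)
      have h8 : π t (e (ρ t⁻¹ p)) = e p := by rw [← hπe t⁻¹ p, hππ']
      have h9 : ρ t (ρ t⁻¹ p) = p := by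
        by_contra hne
        have h10 : e (ρ t (ρ t⁻¹ p)) = e p := by rw [← hπe, h8]
        exact hep (hdisj p (ρ t (ρ t⁻¹ p)) (fun hh => hne hh.symm) (e p) (he p)
          (h10 ▸ he (ρ t (ρ t⁻¹ p))))
      refine ⟨ρ t⁻¹ p, ?_, h9⟩
      show ((TensorProduct.map (π (ρ t (ρ t⁻¹ p) * t)⁻¹).toLinearMap (TensorProduct.map (π t⁻¹).toLinearMap LinearMap.id)) (((TensorProduct.map LinearMap.id (Coalgebra.comul (R := ℂ))) (Coalgebra.comul (R := ℂ) b)) * ((1 : B) ⊗ₜ[ℂ] (e (ρ t (ρ t⁻¹ p)) ⊗ₜ[ℂ] e t)))) ≠ 0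
      rw [h9]
      exact hp
  -- the finsum chain
  have hstep : ∑ᶠ u : G, ((TensorProduct.map (π (ρ t u * t)⁻¹).toLinearMap (TensorProduct.map (π t⁻¹).toLinearMap LinearMap.id)) (((TensorProduct.map LinearMap.id (Coalgebra.comul (R := ℂ))) (Coalgebra.comul (R := ℂ) b)) * ((1 : B) ⊗ₜ[ℂ] (e (ρ t u) ⊗ₜ[ℂ] e t)))) = ∑ᶠ p : G, ((TensorProduct.map (π (p * t)⁻¹).toLinearMap (TensorProduct.map (π t⁻¹).toLinearMap LinearMap.id)) (((TensorProduct.map LinearMap.id (Coalgebra.comul (R := ℂ))) (Coalgebra.comul (R := ℂ) b)) * ((1 : B) ⊗ₜ[ℂ] (e (p) ⊗ₜ[ℂ] e t)))) := by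
    have h1 : ∑ᶠ u : G, ((TensorProduct.map (π (ρ t u * t)⁻¹).toLinearMap (TensorProduct.map (π t⁻¹).toLinearMap LinearMap.id)) (((TensorProduct.map LinearMap.id (Coalgebra.comul (R := ℂ))) (Coalgebra.comul (R := ℂ) b)) * ((1 : B) ⊗ₜ[ℂ] (e (ρ t u) ⊗ₜ[ℂ] e t))))
        = ∑ᶠ u ∈ Function.support (fun u : G => ((TensorProduct.map (π (ρ t u * t)⁻¹).toLinearMap (TensorProduct.map (π t⁻¹).toLinearMap LinearMap.id)) (((TensorProduct.map LinearMap.id (Coalgebra.comul (R := ℂ))) (Coalgebra.comul (R := ℂ) b)) * ((1 : B) ⊗ₜ[ℂ] (e (ρ t u) ⊗ₜ[ℂ] e t))))), ((TensorProduct.map (π (ρ t u * t)⁻¹).toLinearMap (TensorProduct.map (π t⁻¹).toLinearMap LinearMap.id)) (((TensorProduct.map LinearMap.id (Coalgebra.comul (R := ℂ))) (Coalgebra.comul (R := ℂ) b)) * ((1 : B) ⊗ₜ[ℂ] (e (ρ t u) ⊗ₜ[ℂ] e t)))) := by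
      rw [← finsum_mem_univ (fun u : G => ((TensorProduct.map (π (ρ t u * t)⁻¹).toLinearMap (TensorProduct.map (π t⁻¹).toLinearMap LinearMap.id)) (((TensorProduct.map LinearMap.id (Coalgebra.comul (R := ℂ))) (Coalgebra.comul (R := ℂ) b)) * ((1 : B) ⊗ₜ[ℂ] (e (ρ t u) ⊗ₜ[ℂ] e t))))), ← finsum_mem_inter_support, Set.univ_inter]
    have h2 : ∑ᶠ p : G, ((TensorProduct.map (π (p * t)⁻¹).toLinearMap (TensorProduct.map (π t⁻¹).toLinearMap LinearMap.id)) (((TensorProduct.map LinearMap.id (Coalgebra.comul (R := ℂ))) (Coalgebra.comul (R := ℂ) b)) * ((1 : B) ⊗ₜ[ℂ] (e (p) ⊗ₜ[ℂ] e t))))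
        = ∑ᶠ p ∈ Function.support (fun p : G => ((TensorProduct.map (π (p * t)⁻¹).toLinearMap (TensorProduct.map (π t⁻¹).toLinearMap LinearMap.id)) (((TensorProduct.map LinearMap.id (Coalgebra.comul (R := ℂ))) (Coalgebra.comul (R := ℂ) b)) * ((1 : B) ⊗ₜ[ℂ] (e (p) ⊗ₜ[ℂ] e t))))), ((TensorProduct.map (π (p * t)⁻¹).toLinearMap (TensorProduct.map (π t⁻¹).toLinearMap LinearMap.id)) (((TensorProduct.map LinearMap.id (Coalgebra.comul (R := ℂ))) (Coalgebra.comul (R := ℂ) b)) * ((1 : B) ⊗ₜ[ℂ] (e (p) ⊗ₜ[ℂ] e t)))) := by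
      rw [← finsum_mem_univ (fun p : G => ((TensorProduct.map (π (p * t)⁻¹).toLinearMap (TensorProduct.map (π t⁻¹).toLinearMap LinearMap.id)) (((TensorProduct.map LinearMap.id (Coalgebra.comul (R := ℂ))) (Coalgebra.comul (R := ℂ) b)) * ((1 : B) ⊗ₜ[ℂ] (e (p) ⊗ₜ[ℂ] e t))))), ← finsum_mem_inter_support, Set.univ_inter]
    rw [h1, h2]
    exact finsum_mem_eq_of_bijOn (ρ t) hbij (fun x _ => rfl)
  have hcompeq : ∑ᶠ s : G, ((TensorProduct.map (π (s * t⁻¹ * t)⁻¹).toLinearMap (TensorProduct.map (π t⁻¹).toLinearMap LinearMap.id)) (((TensorProduct.map LinearMap.id (Coalgebra.comul (R := ℂ))) (Coalgebra.comul (R := ℂ) b)) * ((1 : B) ⊗ₜ[ℂ] (e (s * t⁻¹) ⊗ₜ[ℂ] e t)))) = ∑ᶠ p : G, ((TensorProduct.map (π (p * t)⁻¹).toLinearMap (TensorProduct.map (π t⁻¹).toLinearMap LinearMap.id)) (((TensorProduct.map LinearMap.id (Coalgebra.comul (R := ℂ))) (Coalgebra.comul (R := ℂ) b)) * ((1 :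 B) ⊗ₜ[ℂ] (e (p) ⊗ₜ[ℂ] e t)))) := by
    have h5 := finsum_comp_equiv (Equiv.mulRight t⁻¹) (f := fun p : G => ((TensorProduct.map (π (p * t)⁻¹).toLinearMap (TensorProduct.map (π t⁻¹).toLinearMap LinearMap.id)) (((TensorProduct.map LinearMap.id (Coalgebra.comul (R := ℂ))) (Coalgebra.comul (R := ℂ) b)) * ((1 : B) ⊗ₜ[ℂ] (e (p) ⊗ₜ[ℂ] e t)))))
    simpa only [Equiv.coe_mulRight] using h5
  rw [← finsum_eq_sum_of_support_subset _ hsub1, ← finsum_eq_sum_of_support_subset _ hsub2,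
    hstep, hcompeq]
end

section
/- Let B be a G-cograded Hopf algebra with counit ε, and π an admissible action of G on B. Then the original counit ε is also a counit for the deformed comultiplication Δ̃: (ε ⊗ ι)(Δ̃(b)(1 ⊗ b')) = bb' and (ι ⊗ ε)((b' ⊗ 1)Δ̃(b)) = b'b for all b ∈ B_p, b' ∈ B_q. -/
open TensorProduct

section Aux
variable {B : Type*} [Ring B] [HopfAlgebra ℂ B]

lemma auxL (t : B ⊗[ℂ] B) (c : B) :
    (TensorProduct.lid ℂ B) ((TensorProduct.map (Coalgebra.counit (R := ℂ)) LinearMap.id)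
      (t * (1 ⊗ₜ[ℂ] c)))
      = (TensorProduct.lid ℂ B) ((TensorProduct.map (Coalgebra.counit (R := ℂ)) LinearMap.id) t) * c := by
  induction t using TensorProduct.induction_on with
  | zero => simp
  | tmul x y => simp [Algebra.TensorProduct.tmul_mul_tmul, smul_mul_assoc]
  | add s t hs ht => simp only [add_mul, map_add, hs, ht, LinearEquiv.map_add]

lemma auxR (t : B ⊗[ℂ] B) (c : B) :
    (TensorProduct.rid ℂ B) ((TensorProduct.map LinearMap.id (Coalgebra.counit (R := ℂ)))
      ((c ⊗ₜ[ℂ] (1 : B)) * t))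
      = c * (TensorProduct.rid ℂ B) ((TensorProduct.map LinearMap.id (Coalgebra.counit (R := ℂ))) t) := by
  induction t using TensorProduct.induction_on with
  | zero => simp
  | tmul x y => simp [Algebra.TensorProduct.tmul_mul_tmul, mul_smul_comm]
  | add s t hs ht => simp only [mul_add, map_add, hs, ht, LinearEquiv.map_add]

lemma auxSmul (t : B ⊗[ℂ] B) (c : B) :
    (TensorProduct.rid ℂ B) ((TensorProduct.map LinearMap.id (Coalgebra.counit (R := ℂ)))
      (t * (1 ⊗ₜ[ℂ] c)))
      = Coalgebra.counit (R := ℂ) c •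
        (TensorProduct.rid ℂ B) ((TensorProduct.map LinearMap.id (Coalgebra.counit (R := ℂ))) t) := by
  induction t using TensorProduct.induction_on with
  | zero => simp
  | tmul x y =>
      simp [Algebra.TensorProduct.tmul_mul_tmul, Bialgebra.counit_mul, mul_smul, mul_comm]
  | add s t hs ht => simp only [add_mul, map_add, hs, ht, smul_add, LinearEquiv.map_add]

lemma auxMap (f : B →ₗ[ℂ] B) (t : B ⊗[ℂ] B) :
    (TensorProduct.rid ℂ B) ((TensorProduct.map LinearMap.id (Coalgebra.counit (R := ℂ)))
      ((TensorProduct.map f LinearMap.id) t))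
      = f ((TensorProduct.rid ℂ B) ((TensorProduct.map LinearMap.id (Coalgebra.counit (R := ℂ))) t)) := by
  induction t using TensorProduct.induction_on with
  | zero => simp
  | tmul x y => simp
  | add s t hs ht => simp only [map_add, hs, ht, LinearEquiv.map_add]

lemma counit_aut (f : B ≃ₐ[ℂ] B)
    (hf : ∀ b : B, Coalgebra.comul (R := ℂ) (f b) =
      (TensorProduct.map f.toLinearMap f.toLinearMap) (Coalgebra.comul (R := ℂ) b))
    (b : B) : Coalgebra.counit (R := ℂ) (f b) = Coalgebra.counit (R := ℂ) b := by
  set ε : B →ₗ[ℂ] ℂ := Coalgebra.counit (R := ℂ)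
  set ε' : B →ₗ[ℂ] ℂ := ε ∘ₗ f.toLinearMap with hε'
  have key : (TensorProduct.map LinearMap.id ε') (Coalgebra.comul (R := ℂ) b) = b ⊗ₜ[ℂ] 1 := by
    have h1 : (TensorProduct.map LinearMap.id ε) (Coalgebra.comul (R := ℂ) (f b))
        = f b ⊗ₜ[ℂ] (1 : ℂ) := Coalgebra.lTensor_counit_comul (f b)
    rw [hf] at h1
    have h2 : (TensorProduct.map LinearMap.id ε) ∘ₗ
        (TensorProduct.map f.toLinearMap f.toLinearMap)
        = (TensorProduct.map f.toLinearMap LinearMap.id) ∘ₗ (TensorProduct.map LinearMap.id ε') := by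
      rw [← TensorProduct.map_comp, ← TensorProduct.map_comp]
      simp [hε']
    have h1' := h1
    rw [← LinearMap.comp_apply, h2, LinearMap.comp_apply] at h1'
    have hinj : Function.Injective (TensorProduct.map f.toLinearMap (LinearMap.id (R := ℂ) (M := ℂ))) := by
      have : (TensorProduct.map f.toLinearMap (LinearMap.id (R := ℂ) (M := ℂ)))
          = (TensorProduct.congr f.toLinearEquiv (LinearEquiv.refl ℂ ℂ)).toLinearMap := rfl
      rw [this]
      exact (TensorProduct.congr f.toLinearEquiv (LinearEquiv.refl ℂ ℂ)).injective
    apply hinj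
    rw [h1']
    simp
  have e1 : (TensorProduct.map ε ε') (Coalgebra.comul (R := ℂ) b) = (1 : ℂ) ⊗ₜ[ℂ] (ε' b) := by
    have h : (TensorProduct.map ε ε') = (TensorProduct.map LinearMap.id ε') ∘ₗ
        (TensorProduct.map ε LinearMap.id) := by
      rw [← TensorProduct.map_comp]; simp
    rw [h, LinearMap.comp_apply]
    have h2 : (TensorProduct.map ε LinearMap.id) (Coalgebra.comul (R := ℂ) b) = (1 : ℂ) ⊗ₜ[ℂ] b :=
      Coalgebra.rTensor_counit_comul b
    rw [h2]
    simp
  have e2 : (TensorProduct.map ε ε') (Coalgebra.comul (R := ℂ) b) = (ε b) ⊗ₜ[ℂ] (1 : ℂ) := by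
    have h : (TensorProduct.map ε ε') = (TensorProduct.map ε LinearMap.id) ∘ₗ
        (TensorProduct.map LinearMap.id ε') := by
      rw [← TensorProduct.map_comp]; simp
    rw [h, LinearMap.comp_apply, key]
    simp
  have heq := e1.symm.trans e2
  have hl := congrArg (TensorProduct.lid ℂ ℂ) heq
  have h3 : ε' b = ε b := by simpa [smul_eq_mul] using hl
  exact h3

end Aux

/-- the original counit `ε` is also a counit for the deformed
comultiplication `Δ̃`: `(ε ⊗ ι)(Δ̃(b)(1 ⊗ b')) = b·b'` and
`(ι ⊗ ε)((b' ⊗ 1)Δ̃(b)) = b'·b` for `b ∈ B_p`, `b' ∈ B_q`. -/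
theorem deformed_comultiplication_counit
    {G : Type*} [Group G] [DecidableEq G] {B : Type*} [Ring B] [HopfAlgebra ℂ B]
    (ℬ : G → Submodule ℂ B)
    (hdec : DirectSum.IsInternal ℬ)
    (horth : ∀ p q : G, p ≠ q → ∀ a ∈ ℬ p, ∀ b ∈ ℬ q, a * b = 0)
    (hcograded₁ : ∀ p q : G,
      Submodule.span ℂ {z | ∃ a ∈ ℬ (p * q), ∃ b ∈ ℬ q,
        z = (Coalgebra.comul (R := ℂ) a) * (1 ⊗ₜ[ℂ] b)} = tensorSub (ℬ p) (ℬ q))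
    (hcograded₂ : ∀ p q : G,
      Submodule.span ℂ {z | ∃ a ∈ ℬ (p * q), ∃ b ∈ ℬ p,
        z = (b ⊗ₜ[ℂ] 1) * (Coalgebra.comul (R := ℂ) a)} = tensorSub (ℬ p) (ℬ q))
    -- the admissible action
    (π : G →* (B ≃ₐ[ℂ] B)) (ρ : G → G → G)
    (hπΔ : ∀ (p : G) (b : B), Coalgebra.comul (R := ℂ) (π p b) =
      (TensorProduct.map (π p).toLinearMap (π p).toLinearMap) (Coalgebra.comul (R := ℂ) b))
    (hπℬ : ∀ p q : G, (ℬ q).map (π p).toLinearMap = ℬ (ρ p q))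
    (hπρ : ∀ p q : G, π (ρ p q) = π (p * q * p⁻¹))
    -- the deformed comultiplication
    (Δt : B →ₗ[ℂ] B ⊗[ℂ] B)
    (hΔt : ∀ (b : B) (q : G), ∀ b' ∈ ℬ q,
      Δt b * (1 ⊗ₜ[ℂ] b') = (TensorProduct.map (π q⁻¹).toLinearMap LinearMap.id)
        (Coalgebra.comul (R := ℂ) b * (1 ⊗ₜ[ℂ] b'))) :
    ∀ p q : G, ∀ b ∈ ℬ p, ∀ b' ∈ ℬ q,
      (TensorProduct.lid ℂ B) ((TensorProduct.map (Coalgebra.counit (R := ℂ)) LinearMap.id)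
        (Δt b * (1 ⊗ₜ[ℂ] b'))) = b * b' ∧
      (TensorProduct.rid ℂ B) ((TensorProduct.map LinearMap.id (Coalgebra.counit (R := ℂ)))
        ((b' ⊗ₜ[ℂ] (1 : B)) * Δt b)) = b' * b := by
  classical
  intro p q b hb b' hb'
  set ε : B →ₗ[ℂ] ℂ := Coalgebra.counit (R := ℂ) with hεdef
  -- decompose 1
  obtain ⟨x, hx⟩ := hdec.surjective 1
  set S := DFinsupp.support x with hSdef
  have hsum : ∑ r ∈ S, ((x r : B)) = 1 := by
    conv_rhs => rw [← hx]
    conv_rhs => rw [← DirectSum.sum_support_of x]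
    rw [map_sum]
    simp [DirectSum.coeAddMonoidHom_of]
    rfl
  -- cross vanishing of counit products
  have hcross : ∀ r r' : G, r ≠ r' → ∀ a ∈ ℬ r, ∀ c ∈ ℬ r', ε a * ε c = 0 := by
    intro r r' hrr' a ha c hc
    rw [hεdef, ← Bialgebra.counit_mul, horth r r' hrr' a ha c hc, map_zero]
  have hεsum : ∑ r ∈ S, ε ((x r : B)) = 1 := by
    rw [← map_sum, hsum, hεdef, Bialgebra.counit_one]
  have hεone : (1 : ℂ) ≠ 0 := one_ne_zero
  obtain ⟨r0, hr0S, hr0⟩ := Finset.exists_ne_zero_of_sum_ne_zero (hεsum ▸ hεone)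
  -- counit axiom facts
  have hcaxL : ∀ a : B, (TensorProduct.map ε LinearMap.id) (Coalgebra.comul (R := ℂ) a)
      = (1 : ℂ) ⊗ₜ[ℂ] a := fun a => Coalgebra.rTensor_counit_comul a
  have hcaxR : ∀ a : B, (TensorProduct.map LinearMap.id ε) (Coalgebra.comul (R := ℂ) a)
      = a ⊗ₜ[ℂ] (1 : ℂ) := fun a => Coalgebra.lTensor_counit_comul a
  -- r0 = 1
  have hr0e : r0 = 1 := by
    by_contra hne
    have hall : ∀ r : G, ∀ y ∈ ℬ r, y = 0 := by
      intro r y hy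
      have hker : tensorSub (ℬ r0) (ℬ r) ≤ LinearMap.ker
          ((TensorProduct.lid ℂ B).toLinearMap ∘ₗ TensorProduct.map ε LinearMap.id) := by
        rw [← hcograded₁ r0 r, Submodule.span_le]
        rintro z ⟨a, ha, c, hc, rfl⟩
        simp only [SetLike.mem_coe, LinearMap.mem_ker, LinearMap.comp_apply,
          LinearEquiv.coe_toLinearMap]
        rw [auxL, hcaxL]
        have : a * c = 0 := horth (r0 * r) r (fun h => hne (mul_eq_right.mp h)) a ha c hc
        simpa using this
      have hmem : ((x r0 : B)) ⊗ₜ[ℂ] y ∈ tensorSub (ℬ r0) (ℬ r) :=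
        Submodule.subset_span ⟨(x r0 : B), (x r0).2, y, hy, rfl⟩
      have := hker hmem
      simp only [LinearMap.mem_ker, LinearMap.comp_apply, LinearEquiv.coe_toLinearMap,
        TensorProduct.map_tmul, LinearMap.id_coe, id_eq, TensorProduct.lid_tmul] at this
      rcases smul_eq_zero.mp this with h | h
      · exact absurd h hr0
      · exact h
    have h1 : (1 : B) = 0 := by
      rw [← hsum]
      exact Finset.sum_eq_zero fun r _ => hall r _ (x r).2
    have : (1 : ℂ) = 0 := by
      calc (1 : ℂ) = ε 1 := (Bialgebra.counit_one (R := ℂ) (A := B)).symm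
      _ = ε 0 := by rw [h1]
      _ = 0 := map_zero ε
    exact one_ne_zero this
  subst hr0e
  -- counit vanishes away from 1
  have hεzero : ∀ r : G, r ≠ 1 → ∀ a ∈ ℬ r, ε a = 0 := by
    intro r hr a ha
    have := hcross r 1 hr a ha (x 1 : B) (x 1).2
    rcases mul_eq_zero.mp this with h | h
    · exact h
    · exact absurd h hr0
  -- value at 1
  have hεe : ε ((x 1 : B)) = 1 := by
    rw [← hεsum]
    exact (Finset.sum_eq_single_of_mem 1 hr0S
      (fun r _ hr => hεzero r hr _ (x r).2)).symm
  constructor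
  · -- first identity
    rw [hΔt b q b' hb']
    have hcomp : (TensorProduct.map ε (LinearMap.id (R := ℂ) (M := B))) ∘ₗ
        (TensorProduct.map (π q⁻¹).toLinearMap LinearMap.id)
        = TensorProduct.map (ε ∘ₗ (π q⁻¹).toLinearMap) LinearMap.id := by
      rw [← TensorProduct.map_comp]; simp
    have hεπ : ε ∘ₗ (π q⁻¹).toLinearMap = ε :=
      LinearMap.ext fun w => counit_aut (π q⁻¹) (hπΔ q⁻¹) w
    rw [← LinearMap.comp_apply, hcomp, hεπ, auxL, hcaxL]
    simp
  · -- second identity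
    rw [auxR]
    have hkey : (TensorProduct.rid ℂ B)
        ((TensorProduct.map LinearMap.id ε) (Δt b)) = b := by
      have hone : Δt b = ∑ r ∈ S, Δt b * (1 ⊗ₜ[ℂ] (x r : B)) := by
        rw [← Finset.mul_sum, ← TensorProduct.tmul_sum, hsum,
          ← Algebra.TensorProduct.one_def, mul_one]
      rw [hone, map_sum, map_sum]
      have hterm : ∀ r ∈ S, (TensorProduct.rid ℂ B)
          ((TensorProduct.map LinearMap.id ε) (Δt b * (1 ⊗ₜ[ℂ] (x r : B))))
          = ε ((x r : B)) • (π r⁻¹) b := by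
        intro r _
        rw [hΔt b r _ (x r).2, auxMap, auxSmul]
        have : (TensorProduct.rid ℂ B)
            ((TensorProduct.map LinearMap.id ε) (Coalgebra.comul (R := ℂ) b)) = b := by
          rw [hcaxR]; simp
        rw [this, map_smul]
        rfl
      rw [Finset.sum_congr rfl hterm]
      rw [Finset.sum_eq_single_of_mem 1 hr0S
        (fun r _ hr => by rw [hεzero r hr _ (x r).2, zero_smul])]
      rw [hεe, one_smul, inv_one, map_one]
      rfl
    rw [hkey]
end

section
/- Let B be a G-cograded Hopf algebra with antipode S and π an admissible action. Define S̃(b) = π_{p⁻¹}(S(b)) for b ∈ B_p. Then S̃ is an antipode for (B, Δ̃): m((S̃ ⊗ ι)(Δ̃(b)(1 ⊗ b'))) = ε(b)b' and m((ι ⊗ S̃)((b' ⊗ 1)Δ̃(b))) = ε(b)b' for all b ∈ B_p, b' ∈ B_q. -/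
open TensorProduct

section AuxHopf

variable {B : Type*} [Ring B] [HopfAlgebra ℂ B]

lemma mulAuxR (f : B →ₗ[ℂ] B) (z : B ⊗[ℂ] B) (c : B) :
    LinearMap.mul' ℂ B (TensorProduct.map f LinearMap.id (z * (1 ⊗ₜ[ℂ] c)))
      = LinearMap.mul' ℂ B (TensorProduct.map f LinearMap.id z) * c := by
  induction z using TensorProduct.induction_on with
  | zero => simp
  | tmul x y => simp [Algebra.TensorProduct.tmul_mul_tmul, mul_assoc]
  | add z₁ z₂ h₁ h₂ => simp only [add_mul, map_add, h₁, h₂]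

lemma mulAuxL (f : B →ₗ[ℂ] B) (z : B ⊗[ℂ] B) (c : B) :
    LinearMap.mul' ℂ B (TensorProduct.map LinearMap.id f ((c ⊗ₜ[ℂ] 1) * z))
      = c * LinearMap.mul' ℂ B (TensorProduct.map LinearMap.id f z) := by
  induction z using TensorProduct.induction_on with
  | zero => simp
  | tmul x y => simp [Algebra.TensorProduct.tmul_mul_tmul, mul_assoc]
  | add z₁ z₂ h₁ h₂ => simp only [mul_add, map_add, h₁, h₂]

lemma counitAuxR (z : B ⊗[ℂ] B) (c : B) :
    (TensorProduct.lid ℂ B) (LinearMap.rTensor B (Coalgebra.counit (R := ℂ)) (z * (1 ⊗ₜ[ℂ] c)))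
      = (TensorProduct.lid ℂ B) (LinearMap.rTensor B (Coalgebra.counit (R := ℂ)) z) * c := by
  induction z using TensorProduct.induction_on with
  | zero => simp
  | tmul x y =>
      simp [Algebra.TensorProduct.tmul_mul_tmul, LinearMap.rTensor_tmul, smul_mul_assoc]
  | add z₁ z₂ h₁ h₂ => simp only [add_mul, map_add, h₁, h₂]

lemma counit_algEquiv (φ : B ≃ₐ[ℂ] B)
    (hφ : ∀ b : B, Coalgebra.comul (R := ℂ) (φ b)
      = TensorProduct.map φ.toLinearMap φ.toLinearMap (Coalgebra.comul (R := ℂ) b)) (b : B) :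
    Coalgebra.counit (R := ℂ) (φ b) = Coalgebra.counit (R := ℂ) b := by
  have step1 : ∀ a : B,
      (TensorProduct.lid ℂ B) (LinearMap.rTensor B
        ((Coalgebra.counit (R := ℂ)) ∘ₗ φ.toLinearMap) (Coalgebra.comul (R := ℂ) a)) = a := by
    intro a
    apply φ.injective
    have e1 : φ.toLinearMap ∘ₗ (TensorProduct.lid ℂ B).toLinearMap ∘ₗ
          LinearMap.rTensor B ((Coalgebra.counit (R := ℂ)) ∘ₗ φ.toLinearMap)
        = (TensorProduct.lid ℂ B).toLinearMap ∘ₗ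
          LinearMap.rTensor B (Coalgebra.counit (R := ℂ)) ∘ₗ
          TensorProduct.map φ.toLinearMap φ.toLinearMap := by
      apply TensorProduct.ext'
      intro x y
      simp [LinearMap.rTensor_tmul]
    have e2 := LinearMap.congr_fun e1 (Coalgebra.comul (R := ℂ) a)
    simp only [LinearMap.comp_apply, LinearEquiv.coe_coe, AlgEquiv.toLinearMap_apply] at e2
    rw [e2, ← hφ a, Coalgebra.rTensor_counit_comul]
    simp
  have e3 : (Coalgebra.counit (R := ℂ)) ∘ₗ (TensorProduct.lid ℂ B).toLinearMap ∘ₗ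
        LinearMap.rTensor B ((Coalgebra.counit (R := ℂ)) ∘ₗ φ.toLinearMap)
      = ((Coalgebra.counit (R := ℂ)) ∘ₗ φ.toLinearMap) ∘ₗ
        (TensorProduct.rid ℂ B).toLinearMap ∘ₗ LinearMap.lTensor B (Coalgebra.counit (R := ℂ)) := by
    apply TensorProduct.ext'
    intro x y
    simp [LinearMap.rTensor_tmul, LinearMap.lTensor_tmul, mul_comm]
  have e4 := LinearMap.congr_fun e3 (Coalgebra.comul (R := ℂ) b)
  simp only [LinearMap.comp_apply, LinearEquiv.coe_coe, AlgEquiv.toLinearMap_apply] at e4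
  rw [step1 b, Coalgebra.lTensor_counit_comul] at e4
  simpa using e4.symm

lemma antipode_algEquiv (φ : B ≃ₐ[ℂ] B)
    (hφ : ∀ b : B, Coalgebra.comul (R := ℂ) (φ b)
      = TensorProduct.map φ.toLinearMap φ.toLinearMap (Coalgebra.comul (R := ℂ) b)) (b : B) :
    HopfAlgebra.antipode (R := ℂ) (φ b) = φ (HopfAlgebra.antipode (R := ℂ) b) := by
  have hcounit := counit_algEquiv φ hφ
  set S : B →ₗ[ℂ] B := HopfAlgebra.antipode (R := ℂ) with hSdef
  set mB : B ⊗[ℂ] B →ₗ[ℂ] B := LinearMap.mul' ℂ B with hmB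
  set T : B →ₗ[ℂ] B := φ.symm.toLinearMap ∘ₗ S ∘ₗ φ.toLinearMap with hTdef
  suffices h : T = S by
    have h' := LinearMap.congr_fun h b
    simp only [hTdef, LinearMap.comp_apply, AlgEquiv.toLinearMap_apply] at h'
    calc S (φ b) = φ (φ.symm (S (φ b))) := (φ.apply_symm_apply _).symm
    _ = φ (S b) := by rw [h']
  -- T is a right convolution inverse of the identity
  have ha : ∀ a : B, mB (TensorProduct.map LinearMap.id T (Coalgebra.comul (R := ℂ) a))
      = Coalgebra.counit (R := ℂ) a • (1 : B) := by
    intro a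
    have e1 : mB ∘ₗ TensorProduct.map LinearMap.id T
        = φ.symm.toLinearMap ∘ₗ mB ∘ₗ TensorProduct.map LinearMap.id S ∘ₗ
          TensorProduct.map φ.toLinearMap φ.toLinearMap := by
      apply TensorProduct.ext'
      intro x y
      simp [hTdef, hmB]
    have e2 := LinearMap.congr_fun e1 (Coalgebra.comul (R := ℂ) a)
    simp only [LinearMap.comp_apply, AlgEquiv.toLinearMap_apply] at e2
    rw [e2, ← hφ a]
    have e5 : TensorProduct.map LinearMap.id S = LinearMap.lTensor B S := rfl
    rw [e5]
    rw [show mB (LinearMap.lTensor B S (Coalgebra.comul (R := ℂ) (φ a)))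
        = algebraMap ℂ B (Coalgebra.counit (R := ℂ) (φ a)) from
      HopfAlgebra.mul_antipode_lTensor_comul_apply (φ a)]
    rw [Algebra.algebraMap_eq_smul_one, map_smul, map_one, hcounit]
  -- the convolution identities
  have c1 : ∀ a : B, mB (TensorProduct.map
        ((Algebra.linearMap ℂ B) ∘ₗ (Coalgebra.counit (R := ℂ))) T (Coalgebra.comul (R := ℂ) a))
      = T a := by
    intro a
    have e : mB ∘ₗ TensorProduct.map ((Algebra.linearMap ℂ B) ∘ₗ (Coalgebra.counit (R := ℂ))) T
        = T ∘ₗ (TensorProduct.lid ℂ B).toLinearMap ∘ₗ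
            LinearMap.rTensor B (Coalgebra.counit (R := ℂ) (A := B)) := by
      apply TensorProduct.ext'
      intro x y
      simp [hmB, Algebra.algebraMap_eq_smul_one, smul_mul_assoc, LinearMap.rTensor_tmul]
    have e2 := LinearMap.congr_fun e (Coalgebra.comul (R := ℂ) a)
    simp only [LinearMap.comp_apply, LinearEquiv.coe_coe] at e2
    rw [e2, Coalgebra.rTensor_counit_comul (R := ℂ) (A := B) a]
    simp
  have c4 : ∀ a : B, mB (TensorProduct.map S
        ((Algebra.linearMap ℂ B) ∘ₗ (Coalgebra.counit (R := ℂ))) (Coalgebra.comul (R := ℂ) a))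
      = S a := by
    intro a
    have e : mB ∘ₗ TensorProduct.map S ((Algebra.linearMap ℂ B) ∘ₗ (Coalgebra.counit (R := ℂ)))
        = S ∘ₗ (TensorProduct.rid ℂ B).toLinearMap ∘ₗ
            LinearMap.lTensor B (Coalgebra.counit (R := ℂ) (A := B)) := by
      apply TensorProduct.ext'
      intro x y
      simp [hmB, Algebra.algebraMap_eq_smul_one, mul_smul_comm, LinearMap.lTensor_tmul]
    have e2 := LinearMap.congr_fun e (Coalgebra.comul (R := ℂ) a)
    simp only [LinearMap.comp_apply, LinearEquiv.coe_coe] at e2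
    rw [e2, Coalgebra.lTensor_counit_comul]
    simp
  -- associativity of convolution, pointwise at b
  apply LinearMap.ext
  intro a
  have hST : TensorProduct.map ((Algebra.linearMap ℂ B) ∘ₗ (Coalgebra.counit (R := ℂ))) T
      = TensorProduct.map (mB ∘ₗ LinearMap.rTensor B S ∘ₗ Coalgebra.comul) T := by
    rw [show (Algebra.linearMap ℂ B) ∘ₗ (Coalgebra.counit (R := ℂ) (A := B))
        = mB ∘ₗ LinearMap.rTensor B S ∘ₗ Coalgebra.comul from
      (HopfAlgebra.mul_antipode_rTensor_comul (R := ℂ) (A := B)).symm]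
  have step : T a = mB (TensorProduct.map (mB ∘ₗ LinearMap.rTensor B S) T
      (LinearMap.rTensor B (Coalgebra.comul (R := ℂ)) (Coalgebra.comul (R := ℂ) a))) := by
    rw [← c1 a, hST]
    congr 1
    have : TensorProduct.map (mB ∘ₗ LinearMap.rTensor B S ∘ₗ Coalgebra.comul) T
        = TensorProduct.map (mB ∘ₗ LinearMap.rTensor B S) T ∘ₗ
          LinearMap.rTensor B (Coalgebra.comul (R := ℂ)) := by
      have h1 : mB ∘ₗ LinearMap.rTensor B S ∘ₗ Coalgebra.comul
          = (mB ∘ₗ LinearMap.rTensor B S) ∘ₗ Coalgebra.comul := by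
        rw [LinearMap.comp_assoc]
      rw [h1, show (T : B →ₗ[ℂ] B) = T ∘ₗ LinearMap.id from (LinearMap.comp_id T).symm]
      rw [TensorProduct.map_comp]
      rfl
    rw [this]
    rfl
  have e4 : mB ∘ₗ TensorProduct.map (mB ∘ₗ LinearMap.rTensor B S) T
      = mB ∘ₗ TensorProduct.map S (mB ∘ₗ LinearMap.lTensor B T) ∘ₗ
        (TensorProduct.assoc ℂ B B B).toLinearMap := by
    apply TensorProduct.ext_threefold
    intro x y z
    simp [hmB, mul_assoc]
  have e5 := LinearMap.congr_fun e4
      (LinearMap.rTensor B (Coalgebra.comul (R := ℂ)) (Coalgebra.comul (R := ℂ) a))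
  simp only [LinearMap.comp_apply, LinearEquiv.coe_coe] at e5
  rw [step, e5, Coalgebra.coassoc_apply]
  -- now: mB (map S (mB ∘ₗ lTensor T) (lTensor comul (comul a))) = S a
  have e6 : TensorProduct.map S (mB ∘ₗ LinearMap.lTensor B T)
        (LinearMap.lTensor B (Coalgebra.comul (R := ℂ)) (Coalgebra.comul (R := ℂ) a))
      = TensorProduct.map S ((mB ∘ₗ LinearMap.lTensor B T) ∘ₗ Coalgebra.comul)
        (Coalgebra.comul (R := ℂ) a) := by
    have h2 := TensorProduct.map_comp S (mB ∘ₗ LinearMap.lTensor B T) LinearMap.id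
      (Coalgebra.comul (R := ℂ) (A := B))
    rw [LinearMap.comp_id] at h2
    rw [h2]
    rfl
  rw [e6]
  have e8 : (mB ∘ₗ LinearMap.lTensor B T) ∘ₗ Coalgebra.comul
      = (Algebra.linearMap ℂ B) ∘ₗ (Coalgebra.counit (R := ℂ) (A := B)) := by
    apply LinearMap.ext
    intro x
    simp only [LinearMap.comp_apply]
    rw [show LinearMap.lTensor B T = TensorProduct.map LinearMap.id T from rfl, ha x]
    simp [Algebra.algebraMap_eq_smul_one]
  rw [e8, c4 a]

end AuxHopf

set_option maxHeartbeats 1600000 in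
/-- `S̃(b) = π_{p⁻¹}(S(b))` (for `b ∈ B_p`) is an antipode for
the deformed comultiplication: `m((S̃ ⊗ ι)(Δ̃(b)(1 ⊗ b'))) = ε(b)b'` and
`m((ι ⊗ S̃)((b' ⊗ 1)Δ̃(b))) = ε(b)b'` for `b ∈ B_p`, `b' ∈ B_q`. -/
theorem deformed_comultiplication_antipode
    {G : Type*} [Group G] [DecidableEq G] {B : Type*} [Ring B] [HopfAlgebra ℂ B]
    (ℬ : G → Submodule ℂ B)
    (hdec : DirectSum.IsInternal ℬ)
    (horth : ∀ p q : G, p ≠ q → ∀ a ∈ ℬ p, ∀ b ∈ ℬ q, a * b = 0)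
    (hcograded₁ : ∀ p q : G,
      Submodule.span ℂ {z | ∃ a ∈ ℬ (p * q), ∃ b ∈ ℬ q,
        z = (Coalgebra.comul (R := ℂ) a) * (1 ⊗ₜ[ℂ] b)} = tensorSub (ℬ p) (ℬ q))
    (hcograded₂ : ∀ p q : G,
      Submodule.span ℂ {z | ∃ a ∈ ℬ (p * q), ∃ b ∈ ℬ p,
        z = (b ⊗ₜ[ℂ] 1) * (Coalgebra.comul (R := ℂ) a)} = tensorSub (ℬ p) (ℬ q))
    -- the admissible action
    (π : G →* (B ≃ₐ[ℂ] B)) (ρ : G → G → G)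
    (hπΔ : ∀ (p : G) (b : B), Coalgebra.comul (R := ℂ) (π p b) =
      (TensorProduct.map (π p).toLinearMap (π p).toLinearMap) (Coalgebra.comul (R := ℂ) b))
    (hπℬ : ∀ p q : G, (ℬ q).map (π p).toLinearMap = ℬ (ρ p q))
    (hπρ : ∀ p q : G, π (ρ p q) = π (p * q * p⁻¹))
    -- the deformed comultiplication
    (Δt : B →ₗ[ℂ] B ⊗[ℂ] B)
    (hΔt : ∀ (b : B) (q : G), ∀ b' ∈ ℬ q,
      Δt b * (1 ⊗ₜ[ℂ] b') = (TensorProduct.map (π q⁻¹).toLinearMap LinearMap.id)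
        (Coalgebra.comul (R := ℂ) b * (1 ⊗ₜ[ℂ] b')))
    (St : B →ₗ[ℂ] B)
    (hSt : ∀ p : G, ∀ b ∈ ℬ p, St b = π p⁻¹ (HopfAlgebra.antipode (R := ℂ) b)) :
    ∀ p q : G, ∀ b ∈ ℬ p, ∀ b' ∈ ℬ q,
      (LinearMap.mul' ℂ B) ((TensorProduct.map St LinearMap.id)
        (Δt b * (1 ⊗ₜ[ℂ] b'))) = Coalgebra.counit (R := ℂ) b • b' ∧
      (LinearMap.mul' ℂ B) ((TensorProduct.map LinearMap.id St)
        ((b' ⊗ₜ[ℂ] (1 : B)) * Δt b)) = Coalgebra.counit (R := ℂ) b • b' := by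
  classical
  intro p q b hb b' hb'
  -- basic facts about π
  have hπmul : ∀ (a c : G) (x : B), π a (π c x) = π (a * c) x := by
    intro a c x
    rw [map_mul]
    rfl
  have hπcancel : ∀ (a : G) (x : B), π a⁻¹ (π a x) = x := by
    intro a x
    rw [hπmul, inv_mul_cancel, map_one]
    rfl
  have hSπ : ∀ (g : G) (x : B),
      HopfAlgebra.antipode (R := ℂ) (π g x) = π g (HopfAlgebra.antipode (R := ℂ) x) :=
    fun g x => antipode_algEquiv (π g) (hπΔ g) x
  -- counit kills nontrivial degrees (in the smul-form)
  have f1 : ∀ g : G, g ≠ 1 → ∀ a ∈ ℬ g, ∀ (h : G), ∀ c ∈ ℬ h,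
      Coalgebra.counit (R := ℂ) a • c = 0 := by
    intro g hg a ha h c hc
    set L : B ⊗[ℂ] B →ₗ[ℂ] B := (TensorProduct.lid ℂ B).toLinearMap ∘ₗ
      LinearMap.rTensor B (Coalgebra.counit (R := ℂ) (A := B)) with hL
    have hmem : a ⊗ₜ[ℂ] c ∈ tensorSub (ℬ g) (ℬ h) :=
      Submodule.subset_span ⟨a, ha, c, hc, rfl⟩
    rw [← hcograded₁ g h] at hmem
    have hker : Submodule.span ℂ {z | ∃ x ∈ ℬ (g * h), ∃ y ∈ ℬ h,
        z = (Coalgebra.comul (R := ℂ) x) * (1 ⊗ₜ[ℂ] y)} ≤ LinearMap.ker L := by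
      rw [Submodule.span_le]
      rintro z ⟨w, hw, v, hv, rfl⟩
      have h1 : L ((Coalgebra.comul (R := ℂ) w) * (1 ⊗ₜ[ℂ] v)) =
          L (Coalgebra.comul (R := ℂ) w) * v := by
        simpa [hL] using counitAuxR (Coalgebra.comul (R := ℂ) w) v
      have h2 : L (Coalgebra.comul (R := ℂ) w) = w := by
        rw [hL, LinearMap.comp_apply, Coalgebra.rTensor_counit_comul (R := ℂ) (A := B) w]
        simp
      simp only [SetLike.mem_coe, LinearMap.mem_ker, h1, h2]
      exact horth (g * h) h (fun e => hg (mul_eq_right.mp e)) w hw v hv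
    have hin := hker hmem
    rw [LinearMap.mem_ker] at hin
    have hLac : L (a ⊗ₜ[ℂ] c) = Coalgebra.counit (R := ℂ) a • c := by
      rw [hL, LinearMap.comp_apply, LinearMap.rTensor_tmul]
      simp
    rw [← hLac]
    exact hin
  -- S(a) * c = 0 unless degrees are inverse
  have f2 : ∀ s u : G, u ≠ s⁻¹ → ∀ a ∈ ℬ s, ∀ c ∈ ℬ u,
      HopfAlgebra.antipode (R := ℂ) a * c = 0 := by
    intro s u hu a ha c hc
    set M : B ⊗[ℂ] B →ₗ[ℂ] B := LinearMap.mul' ℂ B ∘ₗ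
      TensorProduct.map (HopfAlgebra.antipode (R := ℂ)) LinearMap.id with hM
    have hmem : a ⊗ₜ[ℂ] c ∈ tensorSub (ℬ s) (ℬ u) :=
      Submodule.subset_span ⟨a, ha, c, hc, rfl⟩
    rw [← hcograded₁ s u] at hmem
    have hker : Submodule.span ℂ {z | ∃ x ∈ ℬ (s * u), ∃ y ∈ ℬ u,
        z = (Coalgebra.comul (R := ℂ) x) * (1 ⊗ₜ[ℂ] y)} ≤ LinearMap.ker M := by
      rw [Submodule.span_le]
      rintro z ⟨w, hw, v, hv, rfl⟩
      simp only [SetLike.mem_coe, LinearMap.mem_ker, hM, LinearMap.comp_apply]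
      rw [mulAuxR (HopfAlgebra.antipode (R := ℂ)) (Coalgebra.comul (R := ℂ) w) v]
      rw [show LinearMap.mul' ℂ B (TensorProduct.map (HopfAlgebra.antipode (R := ℂ))
            LinearMap.id (Coalgebra.comul (R := ℂ) w))
          = algebraMap ℂ B (Coalgebra.counit (R := ℂ) w) from
        HopfAlgebra.mul_antipode_rTensor_comul_apply w]
      rw [Algebra.algebraMap_eq_smul_one, smul_mul_assoc, one_mul]
      exact f1 (s * u) (fun e => hu (eq_inv_of_mul_eq_one_right e)) w hw u v hv
    have hin := hker hmem
    rw [LinearMap.mem_ker] at hin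
    simpa [hM] using hin
  -- S(a) * c lands in the degree of c
  have f4 : ∀ g h : G, ∀ a ∈ ℬ g, ∀ c ∈ ℬ h,
      HopfAlgebra.antipode (R := ℂ) a * c ∈ ℬ h := by
    intro g h a ha c hc
    set M : B ⊗[ℂ] B →ₗ[ℂ] B := LinearMap.mul' ℂ B ∘ₗ
      TensorProduct.map (HopfAlgebra.antipode (R := ℂ)) LinearMap.id with hM
    have hmem : a ⊗ₜ[ℂ] c ∈ tensorSub (ℬ g) (ℬ h) :=
      Submodule.subset_span ⟨a, ha, c, hc, rfl⟩
    rw [← hcograded₁ g h] at hmem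
    have hker : Submodule.span ℂ {z | ∃ x ∈ ℬ (g * h), ∃ y ∈ ℬ h,
        z = (Coalgebra.comul (R := ℂ) x) * (1 ⊗ₜ[ℂ] y)} ≤ (ℬ h).comap M := by
      rw [Submodule.span_le]
      rintro z ⟨w, hw, v, hv, rfl⟩
      simp only [SetLike.mem_coe, Submodule.mem_comap, hM, LinearMap.comp_apply]
      rw [mulAuxR (HopfAlgebra.antipode (R := ℂ)) (Coalgebra.comul (R := ℂ) w) v]
      rw [show LinearMap.mul' ℂ B (TensorProduct.map (HopfAlgebra.antipode (R := ℂ))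
            LinearMap.id (Coalgebra.comul (R := ℂ) w))
          = algebraMap ℂ B (Coalgebra.counit (R := ℂ) w) from
        HopfAlgebra.mul_antipode_rTensor_comul_apply w]
      rw [Algebra.algebraMap_eq_smul_one, smul_mul_assoc, one_mul]
      exact Submodule.smul_mem _ _ hv
    have hin := hker hmem
    rw [Submodule.mem_comap] at hin
    simpa [hM] using hin
  -- decomposition of 1
  obtain ⟨x1, hx1⟩ := hdec.surjective 1
  set T : Finset G := DFinsupp.support x1 with hT
  have honemem : ∀ g : G, (x1 g : B) ∈ ℬ g := fun g => (x1 g).2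
  have hone : ∑ h ∈ T, ((x1 h : B)) = 1 := by
    rw [← hx1, DirectSum.coeAddMonoidHom_eq_dfinsuppSum]
    rfl
  -- the unit components are right units for the corresponding pieces
  have f6 : ∀ g : G, ∀ y ∈ ℬ g, y * (x1 g : B) = y := by
    intro g y hy
    have h1 : ∑ h ∈ T, y * (x1 h : B) = y := by
      rw [← Finset.mul_sum, hone, mul_one]
    by_cases hg : g ∈ T
    · rw [Finset.sum_eq_single_of_mem g hg
        (fun h _ hne => horth g h (fun e => hne (e.symm)) y hy _ (honemem h))] at h1
      exact h1
    · have hzero : (x1 g : B) = 0 := by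
        have hz := DFinsupp.notMem_support_iff.mp (by rw [← hT]; exact hg)
        rw [hz]
        rfl
      have hy0 : y = 0 := by
        rw [← h1]
        refine Finset.sum_eq_zero ?_
        intro h hh
        exact horth g h (fun e => hg (by rw [e]; exact hh)) y hy _ (honemem h)
      rw [hzero, hy0, zero_mul]
  -- labels of nonzero elements are unique
  have f7 : ∀ g h : G, ∀ v : B, v ≠ 0 → v ∈ ℬ g → v ∈ ℬ h → g = h := by
    intro g h v hv hg hh
    by_contra hne
    exact hv (Submodule.disjoint_def.mp
      (hdec.submodule_iSupIndep.pairwiseDisjoint hne) v hg hh)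
  -- the antipode respects the grading
  have f8 : ∀ g : G, ∀ a ∈ ℬ g, HopfAlgebra.antipode (R := ℂ) a ∈ ℬ g⁻¹ := by
    intro g a ha
    have h1 : HopfAlgebra.antipode (R := ℂ) a
        = ∑ h ∈ T, HopfAlgebra.antipode (R := ℂ) a * (x1 h : B) := by
      rw [← Finset.mul_sum, hone, mul_one]
    rw [h1]
    apply Submodule.sum_mem
    intro h _
    by_cases he : h = g⁻¹
    · subst he
      exact f4 g g⁻¹ a ha _ (honemem g⁻¹)
    · rw [f2 g h he a ha _ (honemem h)]
      exact Submodule.zero_mem _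
  constructor
  · -- FIRST IDENTITY
    rw [hΔt b q b' hb']
    set D : B ⊗[ℂ] B := Coalgebra.comul (R := ℂ) b * (1 ⊗ₜ[ℂ] b') with hD
    set F₁ : B ⊗[ℂ] B →ₗ[ℂ] B := LinearMap.mul' ℂ B ∘ₗ TensorProduct.map St LinearMap.id ∘ₗ
      TensorProduct.map (π q⁻¹).toLinearMap LinearMap.id with hF₁
    set F₂ : B ⊗[ℂ] B →ₗ[ℂ] B := LinearMap.mul' ℂ B ∘ₗ
      TensorProduct.map ((π p⁻¹).toLinearMap ∘ₗ HopfAlgebra.antipode (R := ℂ))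
        LinearMap.id with hF₂
    have hmemD : D ∈ tensorSub (ℬ (p * q⁻¹)) (ℬ q) := by
      rw [← hcograded₁ (p * q⁻¹) q]
      refine Submodule.subset_span ⟨b, ?_, b', hb', hD⟩
      rwa [inv_mul_cancel_right]
    have h12 : F₁ D = F₂ D := by
      have hker : tensorSub (ℬ (p * q⁻¹)) (ℬ q) ≤ LinearMap.ker (F₁ - F₂) := by
        refine Submodule.span_le.mpr ?_
        rintro z ⟨x, hx, y, hy, rfl⟩
        simp only [SetLike.mem_coe, LinearMap.mem_ker, LinearMap.sub_apply, sub_eq_zero,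
          hF₁, hF₂, LinearMap.comp_apply, TensorProduct.map_tmul, LinearMap.id_coe, id_eq,
          LinearMap.mul'_apply, AlgEquiv.toLinearMap_apply, LinearMap.coe_comp,
          Function.comp_apply]
        have hx1 : (π q⁻¹) x ∈ ℬ (ρ q⁻¹ (p * q⁻¹)) := by
          rw [← hπℬ q⁻¹ (p * q⁻¹)]
          exact Submodule.mem_map_of_mem hx
        rw [hSt _ _ hx1, hSπ q⁻¹ x, hπmul]
        have hgrp : π ((ρ q⁻¹ (p * q⁻¹))⁻¹ * q⁻¹) = π p⁻¹ := by
          simp only [map_mul, map_inv, hπρ]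
          group
        rw [hgrp]
      have hin := hker hmemD
      rw [LinearMap.mem_ker, LinearMap.sub_apply, sub_eq_zero] at hin
      exact hin
    have hgoal1 : (LinearMap.mul' ℂ B) (TensorProduct.map St LinearMap.id
        (TensorProduct.map (π q⁻¹).toLinearMap LinearMap.id D)) = F₁ D := rfl
    rw [hgoal1, h12]
    by_cases hp1 : π p = 1
    · have hid : (π p⁻¹).toLinearMap = LinearMap.id := by
        rw [map_inv, hp1, inv_one]
        rfl
      rw [hF₂, hid, LinearMap.id_comp]
      simp only [LinearMap.comp_apply]
      rw [hD, mulAuxR (HopfAlgebra.antipode (R := ℂ)) _ b']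
      rw [show LinearMap.mul' ℂ B (TensorProduct.map (HopfAlgebra.antipode (R := ℂ))
            LinearMap.id (Coalgebra.comul (R := ℂ) b))
          = algebraMap ℂ B (Coalgebra.counit (R := ℂ) b) from
        HopfAlgebra.mul_antipode_rTensor_comul_apply b]
      rw [Algebra.algebraMap_eq_smul_one, smul_mul_assoc, one_mul]
    · have hker0 : tensorSub (ℬ (p * q⁻¹)) (ℬ q) ≤ LinearMap.ker F₂ := by
        refine Submodule.span_le.mpr ?_
        rintro z ⟨x, hx, y, hy, rfl⟩
        simp only [SetLike.mem_coe, LinearMap.mem_ker, hF₂, LinearMap.comp_apply,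
          TensorProduct.map_tmul, LinearMap.id_coe, id_eq, LinearMap.mul'_apply,
          LinearMap.coe_comp, Function.comp_apply, AlgEquiv.toLinearMap_apply]
        have hy' : (π p) y ∈ ℬ (ρ p q) := by
          rw [← hπℬ p q]
          exact Submodule.mem_map_of_mem hy
        have hρ : ρ p q ≠ (p * q⁻¹)⁻¹ := by
          intro he
          apply hp1
          have h2 := hπρ p q
          rw [he, mul_inv_rev, inv_inv] at h2
          simp only [map_mul, map_inv] at h2
          have h4 : π q = π p * π q := mul_right_cancel h2
          exact right_eq_mul.mp h4
        have hzero : HopfAlgebra.antipode (R := ℂ) x * (π p) y = 0 :=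
          f2 (p * q⁻¹) (ρ p q) hρ x hx _ hy'
        calc (π p⁻¹) (HopfAlgebra.antipode (R := ℂ) x) * y
            = (π p⁻¹) (HopfAlgebra.antipode (R := ℂ) x) * (π p⁻¹) ((π p) y) := by
              rw [hπcancel]
        _ = (π p⁻¹) (HopfAlgebra.antipode (R := ℂ) x * (π p) y) := (map_mul _ _ _).symm
        _ = 0 := by rw [hzero, map_zero]
      rw [hker0 hmemD]
      have hp : p ≠ 1 := fun e => hp1 (by rw [e, map_one])
      exact (f1 p hp b hb q b' hb').symm
  · -- SECOND IDENTITY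
    by_cases hb'0 : b' = 0
    · subst hb'0
      simp
    have hsplit : (b' ⊗ₜ[ℂ] (1 : B)) * Δt b
        = ∑ h ∈ T, (b' ⊗ₜ[ℂ] (1 : B)) * (TensorProduct.map (π h⁻¹).toLinearMap LinearMap.id
            (Coalgebra.comul (R := ℂ) b * (1 ⊗ₜ[ℂ] (x1 h : B)))) := by
      have h1 : Δt b = ∑ h ∈ T, Δt b * (1 ⊗ₜ[ℂ] (x1 h : B)) := by
        calc Δt b = Δt b * 1 := (mul_one _).symm
        _ = Δt b * ((1 : B) ⊗ₜ[ℂ] (1 : B)) := by rw [Algebra.TensorProduct.one_def]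
        _ = Δt b * ((1 : B) ⊗ₜ[ℂ] (∑ h ∈ T, (x1 h : B))) := by rw [hone]
        _ = ∑ h ∈ T, Δt b * (1 ⊗ₜ[ℂ] (x1 h : B)) := by
              rw [TensorProduct.tmul_sum, Finset.mul_sum]
      calc (b' ⊗ₜ[ℂ] (1 : B)) * Δt b
          = ∑ h ∈ T, (b' ⊗ₜ[ℂ] (1 : B)) * (Δt b * (1 ⊗ₜ[ℂ] (x1 h : B))) := by
            rw [← Finset.mul_sum, ← h1]
      _ = _ := by
            refine Finset.sum_congr rfl ?_
            intro h _
            rw [hΔt b h _ (honemem h)]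
    rw [hsplit, map_sum, map_sum]
    have hK1 : ∀ (h : G) (z : B ⊗[ℂ] B),
        (b' ⊗ₜ[ℂ] (1 : B)) * (TensorProduct.map (π h⁻¹).toLinearMap LinearMap.id z)
        = TensorProduct.map (π h⁻¹).toLinearMap LinearMap.id
            ((((π h) b') ⊗ₜ[ℂ] (1 : B)) * z) := by
      intro h z
      induction z using TensorProduct.induction_on with
      | zero => simp
      | tmul x y =>
          simp only [TensorProduct.map_tmul, Algebra.TensorProduct.tmul_mul_tmul,
            LinearMap.id_coe, id_eq, AlgEquiv.toLinearMap_apply, map_mul, hπcancel]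
      | add z₁ z₂ h₁ h₂ => simp only [mul_add, map_add, h₁, h₂]
    have hmemw : ∀ h : G, Coalgebra.comul (R := ℂ) b * (1 ⊗ₜ[ℂ] (x1 h : B))
        ∈ tensorSub (ℬ (p * h⁻¹)) (ℬ h) := by
      intro h
      rw [← hcograded₁ (p * h⁻¹) h]
      refine Submodule.subset_span ⟨b, ?_, _, honemem h, rfl⟩
      rwa [inv_mul_cancel_right]
    have hKbad : ∀ h : G, ρ h q ≠ p * h⁻¹ →
        (LinearMap.mul' ℂ B) (TensorProduct.map LinearMap.id St
          ((b' ⊗ₜ[ℂ] (1 : B)) * (TensorProduct.map (π h⁻¹).toLinearMap LinearMap.id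
            (Coalgebra.comul (R := ℂ) b * (1 ⊗ₜ[ℂ] (x1 h : B)))))) = 0 := by
      intro h hbad
      rw [hK1]
      have hz : ((((π h) b') ⊗ₜ[ℂ] (1 : B)) *
          (Coalgebra.comul (R := ℂ) b * (1 ⊗ₜ[ℂ] (x1 h : B)))) = 0 := by
        have hker : tensorSub (ℬ (p * h⁻¹)) (ℬ h) ≤
            LinearMap.ker (LinearMap.mulLeft ℂ (((π h) b') ⊗ₜ[ℂ] (1 : B))) := by
          refine Submodule.span_le.mpr ?_
          rintro z ⟨x, hx, y, hy, rfl⟩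
          simp only [SetLike.mem_coe, LinearMap.mem_ker, LinearMap.mulLeft_apply]
          rw [Algebra.TensorProduct.tmul_mul_tmul]
          have hzz : (π h) b' * x = 0 :=
            horth (ρ h q) (p * h⁻¹) hbad _
              (by rw [← hπℬ h q]; exact Submodule.mem_map_of_mem hb') x hx
          rw [hzz, TensorProduct.zero_tmul]
        have hin := hker (hmemw h)
        rwa [LinearMap.mem_ker, LinearMap.mulLeft_apply] at hin
      rw [hz]
      simp
    have hvmem : ∀ h : G, ρ h q = p * h⁻¹ →
        (((π h) b') ⊗ₜ[ℂ] (1 : B)) * Coalgebra.comul (R := ℂ) b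
          ∈ tensorSub (ℬ (ρ h q)) (ℬ h) := by
      intro h hg
      rw [← hcograded₂ (ρ h q) h]
      refine Submodule.subset_span ⟨b, ?_,
        _, (by rw [← hπℬ h q]; exact Submodule.mem_map_of_mem hb'), rfl⟩
      rw [hg]
      rwa [inv_mul_cancel_right]
    have habs : ∀ (X : Submodule ℂ B) (h : G), ∀ z ∈ tensorSub X (ℬ h),
        z * (1 ⊗ₜ[ℂ] (x1 h : B)) = z := by
      intro X h z hz
      have hker : tensorSub X (ℬ h) ≤ LinearMap.ker
          (LinearMap.mulRight ℂ ((1 : B) ⊗ₜ[ℂ] (x1 h : B)) - LinearMap.id) := by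
        refine Submodule.span_le.mpr ?_
        rintro z ⟨x, hx, y, hy, rfl⟩
        simp only [SetLike.mem_coe, LinearMap.mem_ker, LinearMap.sub_apply,
          LinearMap.mulRight_apply, LinearMap.id_coe, id_eq, sub_eq_zero]
        rw [Algebra.TensorProduct.tmul_mul_tmul, mul_one, f6 h y hy]
      have hin := hker hz
      rw [LinearMap.mem_ker, LinearMap.sub_apply, sub_eq_zero] at hin
      simpa using hin
    have hπS : ∀ (h : G), ∀ z ∈ tensorSub (ℬ (ρ h q)) (ℬ h),
        (LinearMap.mul' ℂ B) (TensorProduct.map LinearMap.id St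
          (TensorProduct.map (π h⁻¹).toLinearMap LinearMap.id z))
        = (π h⁻¹) ((LinearMap.mul' ℂ B) (TensorProduct.map LinearMap.id
            (HopfAlgebra.antipode (R := ℂ)) z)) := by
      intro h z hz
      have hker : tensorSub (ℬ (ρ h q)) (ℬ h) ≤ LinearMap.ker
          ((LinearMap.mul' ℂ B ∘ₗ TensorProduct.map LinearMap.id St ∘ₗ
             TensorProduct.map (π h⁻¹).toLinearMap LinearMap.id)
           - ((π h⁻¹).toLinearMap ∘ₗ LinearMap.mul' ℂ B ∘ₗ
             TensorProduct.map LinearMap.id (HopfAlgebra.antipode (R := ℂ)))) := by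
        refine Submodule.span_le.mpr ?_
        rintro z ⟨x, hx, y, hy, rfl⟩
        simp only [SetLike.mem_coe, LinearMap.mem_ker, LinearMap.sub_apply, sub_eq_zero,
          LinearMap.comp_apply, TensorProduct.map_tmul, LinearMap.id_coe, id_eq,
          LinearMap.mul'_apply, AlgEquiv.toLinearMap_apply]
        rw [hSt h y hy, map_mul]
      have hin := hker hz
      rw [LinearMap.mem_ker, LinearMap.sub_apply, sub_eq_zero] at hin
      simpa using hin
    have hvS : ∀ h : G, (LinearMap.mul' ℂ B) (TensorProduct.map LinearMap.id
          (HopfAlgebra.antipode (R := ℂ))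
          ((((π h) b') ⊗ₜ[ℂ] (1 : B)) * Coalgebra.comul (R := ℂ) b))
        = Coalgebra.counit (R := ℂ) b • ((π h) b') := by
      intro h
      rw [mulAuxL]
      rw [show (LinearMap.mul' ℂ B) (TensorProduct.map LinearMap.id
            (HopfAlgebra.antipode (R := ℂ)) (Coalgebra.comul (R := ℂ) b))
          = algebraMap ℂ B (Coalgebra.counit (R := ℂ) b) from
        HopfAlgebra.mul_antipode_lTensor_comul_apply b]
      rw [Algebra.algebraMap_eq_smul_one, mul_smul_comm, mul_one]
    have hKgood : ∀ h : G, ρ h q = p * h⁻¹ →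
        (LinearMap.mul' ℂ B) (TensorProduct.map LinearMap.id St
          ((b' ⊗ₜ[ℂ] (1 : B)) * (TensorProduct.map (π h⁻¹).toLinearMap LinearMap.id
            (Coalgebra.comul (R := ℂ) b * (1 ⊗ₜ[ℂ] (x1 h : B))))))
        = Coalgebra.counit (R := ℂ) b • b' := by
      intro h hg
      rw [hK1]
      have hassoc : (((π h) b') ⊗ₜ[ℂ] (1 : B)) *
            (Coalgebra.comul (R := ℂ) b * (1 ⊗ₜ[ℂ] (x1 h : B)))
          = ((((π h) b') ⊗ₜ[ℂ] (1 : B)) * Coalgebra.comul (R := ℂ) b) *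
            (1 ⊗ₜ[ℂ] (x1 h : B)) := (mul_assoc _ _ _).symm
      rw [hassoc, habs _ h _ (hvmem h hg), hπS h _ (hvmem h hg), hvS h, map_smul, hπcancel]
    have hphantom : ∀ h : G, ρ h q = p * h⁻¹ → (x1 h : B) = 0 →
        Coalgebra.counit (R := ℂ) b • b' = 0 := by
      intro h hg hz
      have h1 : ((((π h) b') ⊗ₜ[ℂ] (1 : B)) * Coalgebra.comul (R := ℂ) b) = 0 := by
        have hh := habs _ h _ (hvmem h hg)
        rw [hz] at hh
        simpa using hh.symm
      have h2 := hvS h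
      rw [h1] at h2
      simp only [map_zero] at h2
      calc Coalgebra.counit (R := ℂ) b • b'
          = (π h⁻¹) (Coalgebra.counit (R := ℂ) b • ((π h) b')) := by
            rw [map_smul, hπcancel]
      _ = 0 := by rw [← h2, map_zero]
    by_cases hex : ∃ g : G, ρ g q = p * g⁻¹
    · obtain ⟨g₀, hg₀⟩ := hex
      have huniq : ∀ h : G, ρ h q = p * h⁻¹ → h = g₀ := by
        intro h hh
        have e1 : π p = π h * π q := by
          have hr := hπρ h q
          rw [hh] at hr
          simp only [map_mul, map_inv] at hr
          exact mul_right_cancel hr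
        have e2 : π p = π g₀ * π q := by
          have hr := hπρ g₀ q
          rw [hg₀] at hr
          simp only [map_mul, map_inv] at hr
          exact mul_right_cancel hr
        have e3 : π h = π g₀ := mul_right_cancel (e1.symm.trans e2)
        have m1 : (π h) b' ∈ ℬ (p * h⁻¹) := by
          rw [← hh, ← hπℬ h q]
          exact Submodule.mem_map_of_mem hb'
        have m2 : (π h) b' ∈ ℬ (p * g₀⁻¹) := by
          rw [← hg₀, ← hπℬ g₀ q]
          exact ⟨b', hb', by rw [AlgEquiv.toLinearMap_apply, e3]⟩
        have hnz : (π h) b' ≠ 0 := fun e => hb'0 (by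
          have hc := congrArg (π h⁻¹) e
          rwa [hπcancel, map_zero] at hc)
        have hpp := f7 (p * h⁻¹) (p * g₀⁻¹) _ hnz m1 m2
        exact inv_injective (mul_left_cancel hpp)
      by_cases hg₀T : g₀ ∈ T
      · rw [Finset.sum_eq_single_of_mem g₀ hg₀T
          (fun h _ hne => hKbad h (fun hgood => hne (huniq h hgood)))]
        exact hKgood g₀ hg₀
      · rw [Finset.sum_eq_zero
          (fun h hh => hKbad h (fun hgood => hg₀T ((huniq h hgood) ▸ hh)))]
        have hz0 : (x1 g₀ : B) = 0 := by
          have hz := DFinsupp.notMem_support_iff.mp (by rw [← hT]; exact hg₀T)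
          rw [hz]
          rfl
        exact (hphantom g₀ hg₀ hz0).symm
    · push_neg at hex
      rw [Finset.sum_eq_zero (fun h _ => hKbad h (hex h))]
      by_cases hp : p = 1
      · by_contra hne0
        have hne : Coalgebra.counit (R := ℂ) b • b' ≠ 0 := fun e => hne0 e.symm
        have hS0 : ∃ a ∈ ℬ q⁻¹, HopfAlgebra.antipode (R := ℂ) a ≠ 0 := by
          by_contra hall
          push_neg at hall
          apply hne
          have hmem2 : (b' ⊗ₜ[ℂ] (1 : B)) * Coalgebra.comul (R := ℂ) b
              ∈ tensorSub (ℬ q) (ℬ q⁻¹) := by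
            rw [← hcograded₂ q q⁻¹]
            refine Submodule.subset_span ⟨b, ?_, b', hb', rfl⟩
            rw [mul_inv_cancel, ← hp]
            exact hb
          have hker : tensorSub (ℬ q) (ℬ q⁻¹) ≤ LinearMap.ker (LinearMap.mul' ℂ B ∘ₗ
              TensorProduct.map LinearMap.id (HopfAlgebra.antipode (R := ℂ))) := by
            refine Submodule.span_le.mpr ?_
            rintro z ⟨x, hx, y, hy, rfl⟩
            simp only [SetLike.mem_coe, LinearMap.mem_ker, LinearMap.comp_apply,
              TensorProduct.map_tmul, LinearMap.id_coe, id_eq, LinearMap.mul'_apply]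
            rw [hall y hy, mul_zero]
          have h0 := hker hmem2
          rw [LinearMap.mem_ker, LinearMap.comp_apply, mulAuxL] at h0
          rw [show (LinearMap.mul' ℂ B) (TensorProduct.map LinearMap.id
                (HopfAlgebra.antipode (R := ℂ)) (Coalgebra.comul (R := ℂ) b))
              = algebraMap ℂ B (Coalgebra.counit (R := ℂ) b) from
            HopfAlgebra.mul_antipode_lTensor_comul_apply b] at h0
          rwa [Algebra.algebraMap_eq_smul_one, mul_smul_comm, mul_one] at h0
        obtain ⟨a, haq, hSa⟩ := hS0
        have hπg : π (ρ q⁻¹ q⁻¹) = π q⁻¹ := by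
          rw [hπρ]
          simp only [map_mul, map_inv]
          group
        have m1 : (π q⁻¹) (HopfAlgebra.antipode (R := ℂ) a) ∈ ℬ ((ρ q⁻¹ q⁻¹)⁻¹) := by
          have hm1 : (π q⁻¹) a ∈ ℬ (ρ q⁻¹ q⁻¹) := by
            rw [← hπℬ]
            exact Submodule.mem_map_of_mem haq
          have hm2 := f8 _ _ hm1
          rwa [hSπ] at hm2
        have m2 : (π q⁻¹) (HopfAlgebra.antipode (R := ℂ) a) ∈ ℬ (ρ q⁻¹ q) := by
          rw [← hπℬ q⁻¹ q]
          exact Submodule.mem_map_of_mem (by simpa using f8 q⁻¹ a haq)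
        have hnz : (π q⁻¹) (HopfAlgebra.antipode (R := ℂ) a) ≠ 0 := fun e => hSa (by
          have hc := congrArg (π q⁻¹⁻¹) e
          rwa [hπcancel, map_zero] at hc)
        have hlab : (ρ q⁻¹ q⁻¹)⁻¹ = ρ q⁻¹ q := f7 _ _ _ hnz m1 m2
        have e5 : ℬ (ρ (ρ q⁻¹ q⁻¹) q) = ℬ (ρ q⁻¹ q) := by
          rw [← hπℬ, ← hπℬ, hπg]
        have m3 : (π q⁻¹) b' ∈ ℬ (ρ (ρ q⁻¹ q⁻¹) q) := by
          rw [e5, ← hπℬ]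
          exact Submodule.mem_map_of_mem hb'
        have m4 : (π q⁻¹) b' ∈ ℬ (ρ q⁻¹ q) := by
          rw [← hπℬ]
          exact Submodule.mem_map_of_mem hb'
        have hnz2 : (π q⁻¹) b' ≠ 0 := fun e => hb'0 (by
          have hc := congrArg (π q⁻¹⁻¹) e
          rwa [hπcancel, map_zero] at hc)
        have hfin : ρ (ρ q⁻¹ q⁻¹) q = ρ q⁻¹ q := f7 _ _ _ hnz2 m3 m4
        exact hex (ρ q⁻¹ q⁻¹) (by rw [hfin, ← hlab, hp, one_mul])
      · exact (f1 p hp b hb q b' hb').symm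
end

section
/- Let B be a G-cograded Hopf algebra with left integral φ (a linear functional with (ι ⊗ φ)Δ(b) = φ(b)·1), and π an admissible action. Then φ is also left invariant for the deformed comultiplication Δ̃: (ι ⊗ φ)Δ̃(b) = φ(b)·1 for all b ∈ B. -/
open TensorProduct

private theorem grading_toolkit {G : Type*} [DecidableEq G] {B : Type*} [Ring B]
    [Module ℂ B] (ℬ : G → Submodule ℂ B) (hdec : DirectSum.IsInternal ℬ)
    (horth : ∀ p q : G, p ≠ q → ∀ a ∈ ℬ p, ∀ b ∈ ℬ q, a * b = 0) :
    ∃ (U : Finset G) (u : G → B) (pr : G → (B →ₗ[ℂ] B)),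
      (∀ q, u q ∈ ℬ q) ∧
      ((∑ q ∈ U, u q) = 1) ∧
      (∀ q, q ∈ U ↔ ℬ q ≠ ⊥) ∧
      (∀ q, ∀ x ∈ ℬ q, x * u q = x) ∧
      (∀ q, ∀ x ∈ ℬ q, u q * x = x) ∧
      (∀ s x, pr s x ∈ ℬ s) ∧
      (∀ r (x : B), x ∈ ℬ r → pr r x = x) ∧
      (∀ r s (x : B), x ∈ ℬ r → s ≠ r → pr s x = 0) ∧
      (∀ q, pr q 1 = u q) ∧
      (∀ x : B, ∃ t : Finset G, (∑ q ∈ t, pr q x) = x) := by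
  classical
  set E : DirectSum G (fun q => ↥(ℬ q)) ≃ₗ[ℂ] B :=
    LinearEquiv.ofBijective (DirectSum.coeLinearMap ℬ) hdec with hE
  set pr : G → (B →ₗ[ℂ] B) := fun s =>
    (ℬ s).subtype ∘ₗ DirectSum.component ℂ G (fun q => ↥(ℬ q)) s ∘ₗ
      (E.symm : B →ₗ[ℂ] DirectSum G (fun q => ↥(ℬ q))) with hprdef
  have hpr : ∀ (s : G) (x : B), pr s x = ((E.symm x) s : B) := fun s x => rfl
  set u : G → B := fun q => pr q 1 with hudef
  set U : Finset G := (E.symm 1).support with hUdef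
  -- general decomposition
  have hsumgen : ∀ x : B, (∑ q ∈ (E.symm x).support, pr q x) = x := by
    intro x
    have hss := DirectSum.sum_support_of (E.symm x)
    have h2 := congrArg (DirectSum.coeLinearMap ℬ) hss
    rw [map_sum] at h2
    simp only [DirectSum.coeLinearMap_of] at h2
    have h3 : DirectSum.coeLinearMap ℬ (E.symm x) = x := E.apply_symm_apply x
    rw [h3] at h2
    calc (∑ q ∈ (E.symm x).support, pr q x)
        = ∑ q ∈ (E.symm x).support, ((E.symm x) q : B) :=
          Finset.sum_congr rfl fun q _ => hpr q x
      _ = x := h2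
  have hsum1 : (∑ q ∈ U, u q) = 1 := hsumgen 1
  have hu : ∀ q, u q ∈ ℬ q := fun q => ((E.symm 1) q).2
  have hpr_mem : ∀ (s : G) (x : B), pr s x ∈ ℬ s := fun s x => ((E.symm x) s).2
  have hpr_same : ∀ (r : G) (x : B), x ∈ ℬ r → pr r x = x := by
    intro r x hx
    rw [hpr]
    rw [hE, hdec.ofBijective_coeLinearMap_of_mem hx]
  have hpr_ne : ∀ (r s : G) (x : B), x ∈ ℬ r → s ≠ r → pr s x = 0 := by
    intro r s x hx hne
    rw [hpr]
    rw [hE, hdec.ofBijective_coeLinearMap_of_mem_ne (Ne.symm hne) hx]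
    rfl
  -- vanishing off U
  have haux : ∀ q, q ∉ U → ∀ x ∈ ℬ q, x = 0 := by
    intro q hq x hx
    have hx1 : x = ∑ r ∈ U, x * u r := by rw [← Finset.mul_sum, hsum1, mul_one]
    rw [hx1]
    apply Finset.sum_eq_zero
    intro r hr
    exact horth q r (fun h => hq (h ▸ hr)) x hx (u r) (hu r)
  have hrunit : ∀ q, ∀ x ∈ ℬ q, x * u q = x := by
    intro q x hx
    by_cases hq : q ∈ U
    · have hx1 : x = ∑ r ∈ U, x * u r := by rw [← Finset.mul_sum, hsum1, mul_one]
      rw [Finset.sum_eq_single_of_mem q hq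
        (fun r hr hrq => horth q r (Ne.symm hrq) x hx (u r) (hu r))] at hx1
      exact hx1.symm
    · rw [haux q hq x hx, zero_mul]
  have hlunit : ∀ q, ∀ x ∈ ℬ q, u q * x = x := by
    intro q x hx
    by_cases hq : q ∈ U
    · have hx1 : x = ∑ r ∈ U, u r * x := by rw [← Finset.sum_mul, hsum1, one_mul]
      rw [Finset.sum_eq_single_of_mem q hq
        (fun r hr hrq => horth r q hrq (u r) (hu r) x hx)] at hx1
      exact hx1.symm
    · rw [haux q hq x hx, mul_zero]
  have hUiff : ∀ q, q ∈ U ↔ ℬ q ≠ ⊥ := by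
    intro q
    constructor
    · intro hq hbot
      have h0 : u q ≠ 0 := by
        intro h
        apply DFinsupp.mem_support_iff.mp hq
        have : ((E.symm 1) q : B) = 0 := h
        exact Subtype.ext this
      have hmem : u q ∈ (⊥ : Submodule ℂ B) := hbot ▸ hu q
      exact h0 ((Submodule.mem_bot ℂ).mp hmem)
    · intro hbot
      by_contra hq
      apply hbot
      rw [Submodule.eq_bot_iff]
      exact fun x hx => haux q hq x hx
  exact ⟨U, u, pr, hu, hsum1, hUiff, hrunit, hlunit, hpr_mem, hpr_same, hpr_ne,
    fun q => rfl, fun x => ⟨(E.symm x).support, hsumgen x⟩⟩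

private theorem aux_tmul_ne_zero {B : Type*} [AddCommGroup B] [Module ℂ B] {x y : B}
    (hx : x ≠ 0) (hy : y ≠ 0) : x ⊗ₜ[ℂ] y ≠ 0 := by
  intro h
  obtain ⟨f, hf⟩ : ∃ f : Module.Dual ℂ B, f y ≠ 0 := by
    by_contra hc
    push_neg at hc
    exact hy ((Module.forall_dual_apply_eq_zero_iff ℂ y).mp hc)
  have h2 : (TensorProduct.rid ℂ B) ((TensorProduct.map (LinearMap.id) f) (x ⊗ₜ[ℂ] y))
      = f y • x := by simp
  rw [h] at h2
  simp only [map_zero] at h2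
  rcases smul_eq_zero.mp h2.symm with h3 | h3
  · exact hf h3
  · exact hx h3

/-- a left integral `φ` on `B` (i.e. `(ι ⊗ φ)Δ(b) = φ(b)·1`)
remains left invariant for the deformed comultiplication `Δ̃`:
`(ι ⊗ φ)Δ̃(b) = φ(b)·1` for all `b ∈ B`. -/
theorem deformed_comultiplication_left_integral
    {G : Type*} [Group G] [DecidableEq G] {B : Type*} [Ring B] [HopfAlgebra ℂ B]
    (ℬ : G → Submodule ℂ B)
    (hdec : DirectSum.IsInternal ℬ)
    (horth : ∀ p q : G, p ≠ q → ∀ a ∈ ℬ p, ∀ b ∈ ℬ q, a * b = 0)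
    (hcograded₁ : ∀ p q : G,
      Submodule.span ℂ {z | ∃ a ∈ ℬ (p * q), ∃ b ∈ ℬ q,
        z = (Coalgebra.comul (R := ℂ) a) * (1 ⊗ₜ[ℂ] b)} = tensorSub (ℬ p) (ℬ q))
    (hcograded₂ : ∀ p q : G,
      Submodule.span ℂ {z | ∃ a ∈ ℬ (p * q), ∃ b ∈ ℬ p,
        z = (b ⊗ₜ[ℂ] 1) * (Coalgebra.comul (R := ℂ) a)} = tensorSub (ℬ p) (ℬ q))
    -- the admissible action
    (π : G →* (B ≃ₐ[ℂ] B)) (ρ : G → G → G)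
    (hπΔ : ∀ (p : G) (b : B), Coalgebra.comul (R := ℂ) (π p b) =
      (TensorProduct.map (π p).toLinearMap (π p).toLinearMap) (Coalgebra.comul (R := ℂ) b))
    (hπℬ : ∀ p q : G, (ℬ q).map (π p).toLinearMap = ℬ (ρ p q))
    (hπρ : ∀ p q : G, π (ρ p q) = π (p * q * p⁻¹))
    -- the deformed comultiplication
    (Δt : B →ₗ[ℂ] B ⊗[ℂ] B)
    (hΔt : ∀ (b : B) (q : G), ∀ b' ∈ ℬ q,
      Δt b * (1 ⊗ₜ[ℂ] b') = (TensorProduct.map (π q⁻¹).toLinearMap LinearMap.id)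
        (Coalgebra.comul (R := ℂ) b * (1 ⊗ₜ[ℂ] b')))
    (φ : B →ₗ[ℂ] ℂ)
    (hφ : ∀ b : B, (TensorProduct.rid ℂ B) ((TensorProduct.map LinearMap.id φ)
      (Coalgebra.comul (R := ℂ) b)) = φ b • (1 : B)) :
    ∀ b : B, (TensorProduct.rid ℂ B) ((TensorProduct.map LinearMap.id φ) (Δt b))
      = φ b • (1 : B) := by
  classical
  -- trivial case : B is the zero ring
  by_cases htriv : (1 : B) = 0
  · intro b
    have hzero : ∀ x : B, x = 0 := fun x => by
      calc x = x * 1 := (mul_one x).symm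
        _ = 0 := by rw [htriv, mul_zero]
    rw [hzero ((TensorProduct.rid ℂ B) ((TensorProduct.map LinearMap.id φ) (Δt b))),
        hzero (φ b • (1 : B))]
  obtain ⟨U, u, pr, hu, hsum1, hUiff, hrunit, hlunit, hpr_mem, hpr_same, hpr_ne,
    hu_pr, hdecomp⟩ := grading_toolkit ℬ hdec horth
  -- the map F = (ι ⊗ φ) followed by rid
  set Fl : B ⊗[ℂ] B →ₗ[ℂ] B :=
    ((TensorProduct.rid ℂ B).toLinearMap ∘ₗ TensorProduct.map LinearMap.id φ) with hFldef
  have hFl_apply : ∀ z : B ⊗[ℂ] B,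
      Fl z = (TensorProduct.rid ℂ B) ((TensorProduct.map LinearMap.id φ) z) :=
    fun z => rfl
  have hFl_tmul : ∀ (x y : B), Fl (x ⊗ₜ[ℂ] y) = φ y • x := by
    intro x y
    rw [hFl_apply]
    simp
  have hFl_pi : ∀ (g : G) (z : B ⊗[ℂ] B),
      Fl ((TensorProduct.map (π g).toLinearMap LinearMap.id) z) = π g (Fl z) := by
    intro g z
    induction z using TensorProduct.induction_on with
    | zero => simp
    | tmul x y =>
      rw [TensorProduct.map_tmul, hFl_tmul]
      simp only [LinearMap.id_coe, id_eq, AlgEquiv.toLinearMap_apply]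
      rw [hFl_tmul, map_smul]
    | add z w hz hw => simp only [map_add, hz, hw]
  have hFl_sub : ∀ (P Q : Submodule ℂ B) (z : B ⊗[ℂ] B), z ∈ tensorSub P Q → Fl z ∈ P := by
    intro P Q z hz
    rw [tensorSub] at hz
    induction hz using Submodule.span_induction with
    | mem z hz =>
      obtain ⟨x, hx, y, hy, rfl⟩ := hz
      rw [hFl_tmul]
      exact P.smul_mem _ hx
    | zero => simp
    | add _ _ _ _ h1 h2 => rw [map_add]; exact P.add_mem h1 h2
    | smul c _ _ h => rw [map_smul]; exact P.smul_mem c h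
  -- basic properties of U
  have hUbot : ∀ q, q ∉ U → ℬ q = ⊥ := by
    intro q hq
    by_contra h
    exact hq ((hUiff q).mpr h)
  have hUne : U.Nonempty := by
    rw [Finset.nonempty_iff_ne_empty]
    intro h
    rw [h, Finset.sum_empty] at hsum1
    exact htriv hsum1.symm
  have hu_ne : ∀ q ∈ U, u q ≠ 0 := by
    intro q hq h0
    obtain ⟨x, hx, hx0⟩ := (Submodule.ne_bot_iff _).mp ((hUiff q).mp hq)
    apply hx0
    rw [← hrunit q x hx, h0, mul_zero]
  have hUmul : ∀ r q : G, r ∈ U → q ∈ U → r * q ∈ U := by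
    intro r q hr hq
    rw [hUiff]
    intro hbot
    have hts : tensorSub (ℬ r) (ℬ q) = ⊥ := by
      rw [← hcograded₁ r q]
      refine le_bot_iff.mp (Submodule.span_le.mpr ?_)
      rintro z ⟨a, ha, c, hc, rfl⟩
      rw [hbot, Submodule.mem_bot] at ha
      rw [ha, map_zero, zero_mul]
      exact Submodule.zero_mem ⊥
    have hmem : u r ⊗ₜ[ℂ] u q ∈ tensorSub (ℬ r) (ℬ q) :=
      Submodule.subset_span ⟨u r, hu r, u q, hu q, rfl⟩
    rw [hts, Submodule.mem_bot] at hmem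
    exact aux_tmul_ne_zero (hu_ne r hr) (hu_ne q hq) hmem
  have himage : ∀ s ∈ U, U.image (fun q => s * q) = U := by
    intro s hs
    apply Finset.eq_of_subset_of_card_le
    · intro x hx
      obtain ⟨q, hq, rfl⟩ := Finset.mem_image.mp hx
      exact hUmul s q hs hq
    · rw [Finset.card_image_of_injective _ (mul_right_injective s)]
  have hUone : (1 : G) ∈ U := by
    obtain ⟨s, hs⟩ := hUne
    have hs' : s ∈ U.image (fun q => s * q) := by rw [himage s hs]; exact hs
    obtain ⟨q, hq, hsq⟩ := Finset.mem_image.mp hs'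
    have : q = 1 := by
      have h1 : s * q = s * 1 := by rw [mul_one]; exact hsq
      exact mul_left_cancel h1
    rwa [this] at hq
  have hUinv : ∀ q ∈ U, q⁻¹ ∈ U := by
    intro q hq
    have h1' : (1 : G) ∈ U.image (fun r => q * r) := by rw [himage q hq]; exact hUone
    obtain ⟨r, hr, hqr⟩ := Finset.mem_image.mp h1'
    have : r = q⁻¹ := mul_left_cancel (hqr.trans (mul_inv_cancel q).symm)
    rwa [this] at hr
  -- π maps units to units
  have hπu : ∀ (a r : G), π a (u r) = u (ρ a r) := by
    intro a r
    have hmap := hπℬ a r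
    have hmem : π a (u r) ∈ ℬ (ρ a r) := by
      rw [← hmap]
      exact Submodule.mem_map.mpr ⟨u r, hu r, AlgEquiv.toLinearMap_apply _ _⟩
    have hright : ∀ y ∈ ℬ (ρ a r), y * π a (u r) = y := by
      intro y hy
      rw [← hmap] at hy
      obtain ⟨x, hx, hxy⟩ := Submodule.mem_map.mp hy
      rw [← hxy]
      simp only [AlgEquiv.toLinearMap_apply]
      rw [← map_mul, hrunit r x hx]
    calc π a (u r) = u (ρ a r) * π a (u r) := (hlunit _ _ hmem).symm
      _ = u (ρ a r) := hright _ (hu _)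
  -- main statement for homogeneous elements
  have hpiece : ∀ (p : G) (b : B), b ∈ ℬ p → Fl (Δt b) = φ b • 1 := by
    intro p b hb
    by_cases hpU : p ∈ U
    · -- the homogeneous components of (ι ⊗ φ)(Δ b · (1 ⊗ u q))
      have hmq_mem : ∀ q : G,
          Fl (Coalgebra.comul (R := ℂ) b * (1 ⊗ₜ[ℂ] u q)) ∈ ℬ (p * q⁻¹) := by
        intro q
        apply hFl_sub _ (ℬ q)
        rw [← hcograded₁ (p * q⁻¹) q]
        apply Submodule.subset_span
        exact ⟨b, by rwa [inv_mul_cancel_right], u q, hu q, rfl⟩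
      have h1t : (1 : B ⊗[ℂ] B) = ∑ q ∈ U, (1 : B) ⊗ₜ[ℂ] u q := by
        rw [← TensorProduct.tmul_sum, hsum1]
        exact Algebra.TensorProduct.one_def
      have hsum_m : (∑ q ∈ U, Fl (Coalgebra.comul (R := ℂ) b * (1 ⊗ₜ[ℂ] u q)))
          = φ b • 1 := by
        calc (∑ q ∈ U, Fl (Coalgebra.comul (R := ℂ) b * (1 ⊗ₜ[ℂ] u q)))
            = Fl (Coalgebra.comul (R := ℂ) b * ∑ q ∈ U, (1 : B) ⊗ₜ[ℂ] u q) := by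
              rw [Finset.mul_sum, map_sum]
          _ = Fl (Coalgebra.comul (R := ℂ) b) := by rw [← h1t, mul_one]
          _ = φ b • 1 := by rw [hFl_apply]; exact hφ b
      have hm_eq : ∀ q₀ ∈ U,
          Fl (Coalgebra.comul (R := ℂ) b * (1 ⊗ₜ[ℂ] u q₀)) = φ b • u (p * q₀⁻¹) := by
        intro q₀ hq₀
        have hc := congrArg (pr (p * q₀⁻¹)) hsum_m
        rw [map_sum, map_smul, hu_pr] at hc
        have hz : ∀ q ∈ U, q ≠ q₀ →
            pr (p * q₀⁻¹) (Fl (Coalgebra.comul (R := ℂ) b * (1 ⊗ₜ[ℂ] u q))) = 0 := by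
          intro q _ hne
          exact hpr_ne (p * q⁻¹) (p * q₀⁻¹) _ (hmq_mem q)
            (fun h => hne ((inv_injective (mul_left_cancel h)).symm))
        rw [Finset.sum_eq_single_of_mem q₀ hq₀ hz,
          hpr_same _ _ (hmq_mem q₀)] at hc
        exact hc
      -- decompose Δt b
      have hδ : Δt b = ∑ q ∈ U, (TensorProduct.map (π q⁻¹).toLinearMap LinearMap.id)
          (Coalgebra.comul (R := ℂ) b * (1 ⊗ₜ[ℂ] u q)) := by
        calc Δt b = Δt b * 1 := (mul_one _).symm
          _ = ∑ q ∈ U, Δt b * (1 ⊗ₜ[ℂ] u q) := by rw [h1t, Finset.mul_sum]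
          _ = _ := Finset.sum_congr rfl fun q _ => hΔt b q (u q) (hu q)
      rw [hδ, map_sum]
      have hterm : ∀ q ∈ U,
          Fl ((TensorProduct.map (π q⁻¹).toLinearMap LinearMap.id)
            (Coalgebra.comul (R := ℂ) b * (1 ⊗ₜ[ℂ] u q)))
          = φ b • u (ρ q⁻¹ (p * q⁻¹)) := by
        intro q hq
        rw [hFl_pi, hm_eq q hq, map_smul, hπu]
      rw [Finset.sum_congr rfl hterm, ← Finset.smul_sum]
      congr 1
      -- the reindexing bijection
      have hσU : ∀ q ∈ U, ρ q⁻¹ (p * q⁻¹) ∈ U := by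
        intro q hq
        have hpq : p * q⁻¹ ∈ U := hUmul p q⁻¹ hpU (hUinv q hq)
        rw [hUiff]
        intro hbot
        obtain ⟨x, hx, hx0⟩ := (Submodule.ne_bot_iff _).mp ((hUiff _).mp hpq)
        have hmm : (π q⁻¹).toLinearMap x ∈ (ℬ (p * q⁻¹)).map (π q⁻¹).toLinearMap :=
          Submodule.mem_map_of_mem hx
        rw [hπℬ, hbot, Submodule.mem_bot] at hmm
        apply hx0
        have hx1 : (π q⁻¹) x = 0 := by rw [← AlgEquiv.toLinearMap_apply]; exact hmm
        exact (map_eq_zero_iff _ (π q⁻¹).injective).mp hx1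
      have hσinj : ∀ q ∈ U, ∀ q' ∈ U,
          ρ q⁻¹ (p * q⁻¹) = ρ q'⁻¹ (p * q'⁻¹) → q = q' := by
        intro q hq q' hq' heq
        have h1 : π (ρ q⁻¹ (p * q⁻¹)) = π (q⁻¹ * p) := by
          rw [hπρ]; congr 1; group
        have h2 : π (ρ q'⁻¹ (p * q'⁻¹)) = π (q'⁻¹ * p) := by
          rw [hπρ]; congr 1; group
        have h4 : π (q⁻¹ * p) = π (q'⁻¹ * p) := by rw [← h1, ← h2, heq]
        have h3 : π q⁻¹ = π q'⁻¹ := by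
          calc π q⁻¹ = π (q⁻¹ * p) * π p⁻¹ := by rw [← map_mul, mul_inv_cancel_right]
            _ = π (q'⁻¹ * p) * π p⁻¹ := by rw [h4]
            _ = π q'⁻¹ := by rw [← map_mul, mul_inv_cancel_right]
        have hinj : Function.Injective ((π q⁻¹).toLinearMap) :=
          fun a b h => (π q⁻¹).injective (by simpa using h)
        have hBeq : ℬ (p * q⁻¹) = ℬ (p * q'⁻¹) := by
          have e1 := hπℬ q⁻¹ (p * q⁻¹)
          have e2 := hπℬ q'⁻¹ (p * q'⁻¹)
          rw [← heq, ← h3] at e2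
          rw [← e2] at e1
          exact Submodule.map_injective_of_injective hinj e1
        by_contra hne
        have hne' : p * q⁻¹ ≠ p * q'⁻¹ := fun h => hne (inv_injective (mul_left_cancel h))
        have hdisj := hdec.submodule_iSupIndep.pairwiseDisjoint hne'
        rw [Function.onFun, hBeq] at hdisj
        have hbb : ℬ (p * q'⁻¹) = ⊥ := disjoint_self.mp hdisj
        exact (hUiff _).mp (hUmul p q'⁻¹ hpU (hUinv q' hq')) hbb
      have himg2 : U.image (fun q => ρ q⁻¹ (p * q⁻¹)) = U := by
        apply Finset.eq_of_subset_of_card_le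
        · intro s hs
          obtain ⟨q, hq, rfl⟩ := Finset.mem_image.mp hs
          exact hσU q hq
        · rw [Finset.card_image_of_injOn (fun q hq q' hq' h => hσinj q hq q' hq' h)]
      calc ∑ q ∈ U, u (ρ q⁻¹ (p * q⁻¹))
          = ∑ s ∈ U.image (fun q => ρ q⁻¹ (p * q⁻¹)), u s :=
            (Finset.sum_image (fun q hq q' hq' h => hσinj q hq q' hq' h)).symm
        _ = ∑ s ∈ U, u s := by rw [himg2]
        _ = 1 := hsum1
    · -- b = 0
      have hbb : ℬ p = ⊥ := hUbot p hpU
      have hb0 : b = 0 := by rwa [hbb, Submodule.mem_bot] at hb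
      rw [hb0]
      simp
  -- conclude by linearity
  intro b
  rw [← hFl_apply]
  obtain ⟨t, ht⟩ := hdecomp b
  rw [← ht]
  simp only [map_sum]
  rw [Finset.sum_smul]
  exact Finset.sum_congr rfl fun q _ => hpiece q (pr q b) (hpr_mem q b)
end

section
/- Let B be a G-cograded Hopf algebra with right integral ψ and admissible action π. Define ψ̃(b) = ψ(π_{p⁻¹}(b)) for b ∈ B_p. Then ψ̃ is a right integral on (B, Δ̃): (ψ̃ ⊗ ι)Δ̃(b) = ψ̃(b)·1 for all b ∈ B. -/
open TensorProduct


lemma lid_map_mul_right {B : Type*} [Ring B] [Algebra ℂ B]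
    (f : B →ₗ[ℂ] ℂ) (z : B ⊗[ℂ] B) (x : B) :
    (TensorProduct.lid ℂ B) ((TensorProduct.map f LinearMap.id) (z * (1 ⊗ₜ[ℂ] x)))
      = (TensorProduct.lid ℂ B) ((TensorProduct.map f LinearMap.id) z) * x := by
  induction z using TensorProduct.induction_on with
  | zero => simp
  | tmul u v => simp [Algebra.TensorProduct.tmul_mul_tmul, smul_mul_assoc]
  | add z w hz hw => simp [add_mul, hz, hw]

lemma lid_map_equiv {B : Type*} [Ring B] [Algebra ℂ B]
    (f : B →ₗ[ℂ] ℂ) (g : B ≃ₐ[ℂ] B) (w : B ⊗[ℂ] B) :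
    (TensorProduct.lid ℂ B) ((TensorProduct.map f LinearMap.id)
        ((TensorProduct.map g.toLinearMap g.toLinearMap) w))
      = g ((TensorProduct.lid ℂ B) ((TensorProduct.map (f ∘ₗ g.toLinearMap) LinearMap.id) w)) := by
  induction w using TensorProduct.induction_on with
  | zero => simp
  | tmul u v => simp
  | add z w hz hw => simp [hz, hw]

/-- if `ψ` is a right integral on `B` and `ψ̃(b) = ψ(π_{p⁻¹}(b))`
for `b ∈ B_p`, then `ψ̃` is a right integral on `(B, Δ̃)`:
`(ψ̃ ⊗ ι)Δ̃(b) = ψ̃(b)·1` for all `b ∈ B`. -/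
theorem deformed_comultiplication_right_integral
    {G : Type*} [Group G] [DecidableEq G] {B : Type*} [Ring B] [HopfAlgebra ℂ B]
    (ℬ : G → Submodule ℂ B)
    (hdec : DirectSum.IsInternal ℬ)
    (horth : ∀ p q : G, p ≠ q → ∀ a ∈ ℬ p, ∀ b ∈ ℬ q, a * b = 0)
    (hcograded₁ : ∀ p q : G,
      Submodule.span ℂ {z | ∃ a ∈ ℬ (p * q), ∃ b ∈ ℬ q,
        z = (Coalgebra.comul (R := ℂ) a) * (1 ⊗ₜ[ℂ] b)} = tensorSub (ℬ p) (ℬ q))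
    (hcograded₂ : ∀ p q : G,
      Submodule.span ℂ {z | ∃ a ∈ ℬ (p * q), ∃ b ∈ ℬ p,
        z = (b ⊗ₜ[ℂ] 1) * (Coalgebra.comul (R := ℂ) a)} = tensorSub (ℬ p) (ℬ q))
    -- the admissible action
    (π : G →* (B ≃ₐ[ℂ] B)) (ρ : G → G → G)
    (hπΔ : ∀ (p : G) (b : B), Coalgebra.comul (R := ℂ) (π p b) =
      (TensorProduct.map (π p).toLinearMap (π p).toLinearMap) (Coalgebra.comul (R := ℂ) b))
    (hπℬ : ∀ p q : G, (ℬ q).map (π p).toLinearMap = ℬ (ρ p q))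
    (hπρ : ∀ p q : G, π (ρ p q) = π (p * q * p⁻¹))
    -- the deformed comultiplication
    (Δt : B →ₗ[ℂ] B ⊗[ℂ] B)
    (hΔt : ∀ (b : B) (q : G), ∀ b' ∈ ℬ q,
      Δt b * (1 ⊗ₜ[ℂ] b') = (TensorProduct.map (π q⁻¹).toLinearMap LinearMap.id)
        (Coalgebra.comul (R := ℂ) b * (1 ⊗ₜ[ℂ] b')))
    (ψ ψt : B →ₗ[ℂ] ℂ)
    (hψ : ∀ b : B, (TensorProduct.lid ℂ B) ((TensorProduct.map ψ LinearMap.id)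
      (Coalgebra.comul (R := ℂ) b)) = ψ b • (1 : B))
    (hψt : ∀ p : G, ∀ b ∈ ℬ p, ψt b = ψ (π p⁻¹ b)) :
    ∀ b : B, (TensorProduct.lid ℂ B) ((TensorProduct.map ψt LinearMap.id) (Δt b))
      = ψt b • (1 : B) := by
  have htop : (⨆ r, ℬ r) = ⊤ := hdec.submodule_iSup_eq_top
  intro b
  have hb : b ∈ ⨆ r, ℬ r := htop ▸ Submodule.mem_top
  induction hb using Submodule.iSup_induction' with
  | zero => simp
  | add x y _ _ hx hy => simp [map_add, add_smul, hx, hy]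
  | mem r b hbr =>
    -- key claim for homogeneous x
    have key : ∀ q : G, ∀ x ∈ ℬ q,
        (TensorProduct.lid ℂ B) ((TensorProduct.map ψt LinearMap.id) (Δt b * (1 ⊗ₜ[ℂ] x)))
          = ψt b • x := by
      intro q x hx
      rw [hΔt b q x hx]
      have hmem : Coalgebra.comul (R := ℂ) b * (1 ⊗ₜ[ℂ] x)
          ∈ tensorSub (ℬ (r * q⁻¹)) (ℬ q) := by
        rw [← hcograded₁ (r * q⁻¹) q]
        exact Submodule.subset_span ⟨b, by simpa using hbr, x, hx, rfl⟩
      have hswap : ∀ z ∈ tensorSub (ℬ (r * q⁻¹)) (ℬ q),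
          (TensorProduct.lid ℂ B) ((TensorProduct.map ψt LinearMap.id)
              ((TensorProduct.map (π q⁻¹).toLinearMap LinearMap.id) z))
            = (TensorProduct.lid ℂ B)
              ((TensorProduct.map (ψ ∘ₗ (π r⁻¹).toLinearMap) LinearMap.id) z) := by
        intro z hz
        induction hz using Submodule.span_induction with
        | mem z hzs =>
          obtain ⟨u, hu, v, hv, rfl⟩ := hzs
          have hu' : (π q⁻¹) u ∈ ℬ (ρ q⁻¹ (r * q⁻¹)) := by
            rw [← hπℬ]; exact ⟨u, hu, rfl⟩
          have hscal : ψt ((π q⁻¹) u) = ψ ((π r⁻¹) u) := by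
            rw [hψt _ _ hu']
            have h1 : π ((ρ q⁻¹ (r * q⁻¹))⁻¹) = π ((q⁻¹ * (r * q⁻¹) * q⁻¹⁻¹)⁻¹) := by
              rw [map_inv, map_inv, hπρ]
            have h2 : π ((ρ q⁻¹ (r * q⁻¹))⁻¹) ((π q⁻¹) u)
                = π ((q⁻¹ * (r * q⁻¹) * q⁻¹⁻¹)⁻¹ * q⁻¹) u := by
              rw [h1, map_mul]; rfl
            have h3 : (q⁻¹ * (r * q⁻¹) * q⁻¹⁻¹)⁻¹ * q⁻¹ = r⁻¹ := by group
            rw [h2, h3]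
          simp only [TensorProduct.map_tmul, LinearMap.id_coe, id_eq,
            AlgEquiv.toLinearMap_apply, TensorProduct.lid_tmul, LinearMap.coe_comp,
            Function.comp_apply, hscal]
        | zero => simp
        | add z w _ _ hz hw => simp only [map_add, hz, hw]
        | smul c z _ hz => simp only [map_smul, hz]
      rw [hswap _ hmem, lid_map_mul_right]
      have hint : (TensorProduct.lid ℂ B)
          ((TensorProduct.map (ψ ∘ₗ (π r⁻¹).toLinearMap) LinearMap.id)
            (Coalgebra.comul (R := ℂ) b)) = ψt b • (1 : B) := by
        have h0 := hψ ((π r⁻¹) b)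
        rw [hπΔ, lid_map_equiv ψ (π r⁻¹)] at h0
        have h1 := congrArg (π r⁻¹).symm h0
        rw [AlgEquiv.symm_apply_apply] at h1
        simpa [hψt r b hbr] using h1
      rw [hint, smul_mul_assoc, one_mul]
    have keyall : ∀ x, x ∈ (⨆ r, ℬ r) → (TensorProduct.lid ℂ B)
        ((TensorProduct.map ψt LinearMap.id) (Δt b * (1 ⊗ₜ[ℂ] x)))
          = ψt b • x := by
      intro x hx
      induction hx using Submodule.iSup_induction' with
      | mem q x hx => exact key q x hx
      | zero => simp
      | add x y _ _ hx hy => simp [TensorProduct.tmul_add, mul_add, hx, hy, smul_add]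
    have h1 : (1 : B) ∈ ⨆ r, ℬ r := htop ▸ Submodule.mem_top
    rw [← keyall 1 h1, ← Algebra.TensorProduct.one_def, mul_one]
end

section
/- Suppose the admissible action π of G on the G-cograded Hopf algebra B is a crossing, i.e., π_p(B_q) = B_{pqp⁻¹} for all p, q. Then the deformed coalgebra B̃ = (B, Δ̃) is again G-cograded with components B̃_p = B_{p⁻¹}: namely Δ̃(B̃_p)(1 ⊗ B̃_q) = B̃_{pq⁻¹} ⊗ B̃_q and (B̃_q ⊗ 1)Δ̃(B̃_p) = B̃_q ⊗ B̃_{q⁻¹p} for all p, q ∈ G. -/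
open TensorProduct

lemma tmap_mul {B : Type*} [Ring B] [Algebra ℂ B] (f : B ≃ₐ[ℂ] B) (u v : B ⊗[ℂ] B) :
    TensorProduct.map f.toLinearMap LinearMap.id (u * v) =
      TensorProduct.map f.toLinearMap LinearMap.id u *
        TensorProduct.map f.toLinearMap LinearMap.id v := by
  show (Algebra.TensorProduct.map f.toAlgHom (AlgHom.id ℂ B)) (u * v) =
    (Algebra.TensorProduct.map f.toAlgHom (AlgHom.id ℂ B)) u *
    (Algebra.TensorProduct.map f.toAlgHom (AlgHom.id ℂ B)) v
  exact map_mul _ u v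

lemma tensorSub_map {B : Type*} [Ring B] [Algebra ℂ B]
    (f : B →ₗ[ℂ] B) (P Q : Submodule ℂ B) :
    (tensorSub P Q).map (TensorProduct.map f LinearMap.id) = tensorSub (P.map f) Q := by
  rw [tensorSub, tensorSub, Submodule.map_span]
  congr 1
  ext z
  constructor
  · rintro ⟨_, ⟨x, hx, y, hy, rfl⟩, rfl⟩
    exact ⟨f x, ⟨x, hx, rfl⟩, y, hy, by simp [TensorProduct.map_tmul]⟩
  · rintro ⟨_, ⟨x, hx, rfl⟩, y, hy, rfl⟩
    exact ⟨x ⊗ₜ y, ⟨x, hx, y, hy, rfl⟩, by simp⟩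

lemma mul_tensorSub_zero {B : Type*} [Ring B] [Algebra ℂ B] {G : Type*} [Group G]
    (ℬ : G → Submodule ℂ B)
    (horth : ∀ p q : G, p ≠ q → ∀ a ∈ ℬ p, ∀ b ∈ ℬ q, a * b = 0)
    {r r' : G} (hne : r ≠ r') {u : B} (hu : u ∈ ℬ r) (Q : Submodule ℂ B)
    {t : B ⊗[ℂ] B} (ht : t ∈ tensorSub (ℬ r') Q) : (u ⊗ₜ[ℂ] (1:B)) * t = 0 := by
  induction ht using Submodule.span_induction with
  | mem z hz =>
    obtain ⟨x, hx, y, hy, rfl⟩ := hz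
    rw [Algebra.TensorProduct.tmul_mul_tmul, horth r r' hne u hu x hx, zero_tmul]
  | zero => rw [mul_zero]
  | add a b _ _ ha hb => rw [mul_add, ha, hb, add_zero]
  | smul c a _ ha => rw [mul_smul_comm, ha, smul_zero]

/-- if the admissible action `π` is a crossing
(`π_p(B_q) = B_{pqp⁻¹}`), then the deformed coalgebra `B̃ = (B, Δ̃)` is again
`G`-cograded with components `B̃_p = B_{p⁻¹}`:
`Δ̃(B̃_p)(1 ⊗ B̃_q) = B̃_{pq⁻¹} ⊗ B̃_q` and `(B̃_q ⊗ 1)Δ̃(B̃_p) = B̃_q ⊗ B̃_{q⁻¹p}`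
(note `B̃_{pq⁻¹} = B_{qp⁻¹}` and `B̃_{q⁻¹p} = B_{p⁻¹q}`). -/
theorem crossing_deformation_is_cograded
    {G : Type*} [Group G] [DecidableEq G] {B : Type*} [Ring B] [HopfAlgebra ℂ B]
    (ℬ : G → Submodule ℂ B)
    (hdec : DirectSum.IsInternal ℬ)
    (horth : ∀ p q : G, p ≠ q → ∀ a ∈ ℬ p, ∀ b ∈ ℬ q, a * b = 0)
    (hcograded₁ : ∀ p q : G,
      Submodule.span ℂ {z | ∃ a ∈ ℬ (p * q), ∃ b ∈ ℬ q,
        z = (Coalgebra.comul (R := ℂ) a) * (1 ⊗ₜ[ℂ] b)} = tensorSub (ℬ p) (ℬ q))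
    (hcograded₂ : ∀ p q : G,
      Submodule.span ℂ {z | ∃ a ∈ ℬ (p * q), ∃ b ∈ ℬ p,
        z = (b ⊗ₜ[ℂ] 1) * (Coalgebra.comul (R := ℂ) a)} = tensorSub (ℬ p) (ℬ q))
    -- the admissible action
    (π : G →* (B ≃ₐ[ℂ] B))
    (hπΔ : ∀ (p : G) (b : B), Coalgebra.comul (R := ℂ) (π p b) =
      (TensorProduct.map (π p).toLinearMap (π p).toLinearMap) (Coalgebra.comul (R := ℂ) b))
    (hcross : ∀ p q : G, (ℬ q).map (π p).toLinearMap = ℬ (p * q * p⁻¹))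
    -- the deformed comultiplication
    (Δt : B →ₗ[ℂ] B ⊗[ℂ] B)
    (hΔt : ∀ (b : B) (q : G), ∀ b' ∈ ℬ q,
      Δt b * (1 ⊗ₜ[ℂ] b') = (TensorProduct.map (π q⁻¹).toLinearMap LinearMap.id)
        (Coalgebra.comul (R := ℂ) b * (1 ⊗ₜ[ℂ] b'))) :
    ∀ p q : G,
      Submodule.span ℂ {z | ∃ x ∈ ℬ p⁻¹, ∃ y ∈ ℬ q⁻¹, z = Δt x * (1 ⊗ₜ[ℂ] y)}
        = tensorSub (ℬ (q * p⁻¹)) (ℬ q⁻¹) ∧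
      Submodule.span ℂ {z | ∃ x ∈ ℬ p⁻¹, ∃ y ∈ ℬ q⁻¹, z = (y ⊗ₜ[ℂ] (1 : B)) * Δt x}
        = tensorSub (ℬ q⁻¹) (ℬ (p⁻¹ * q)) := by
  have hπmem : ∀ (g s : G) (y : B), y ∈ ℬ s → π g y ∈ ℬ (g * s * g⁻¹) := by
    intro g s y hy
    rw [← hcross g s]
    exact ⟨y, hy, rfl⟩
  have hinv : ∀ (g : G) (z : B), π g⁻¹ (π g z) = z := by
    intro g z
    have h : π g⁻¹ * π g = 1 := by rw [← map_mul, inv_mul_cancel, map_one]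
    calc π g⁻¹ (π g z) = (π g⁻¹ * π g) z := rfl
      _ = z := by rw [h]; rfl
  have hsup : (⨆ s, ℬ s) = ⊤ := hdec.submodule_iSup_eq_top
  intro p q
  -- the key identity for the second statement
  have key : ∀ x ∈ ℬ p⁻¹, ∀ y ∈ ℬ q⁻¹,
      (y ⊗ₜ[ℂ] (1:B)) * Δt x =
      (TensorProduct.map (π (q⁻¹*p)).toLinearMap LinearMap.id)
        ((π (p⁻¹*q) y ⊗ₜ[ℂ] (1:B)) * Coalgebra.comul (R := ℂ) x) := by
    intro x hx y hy
    have main : ∀ b : B, (y ⊗ₜ[ℂ] (1:B)) * (Δt x * (1 ⊗ₜ[ℂ] b)) =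
        (TensorProduct.map (π (q⁻¹*p)).toLinearMap LinearMap.id)
          ((π (p⁻¹*q) y ⊗ₜ[ℂ] (1:B)) * (Coalgebra.comul (R := ℂ) x * (1 ⊗ₜ[ℂ] b))) := by
      intro b
      have hb : b ∈ ⨆ s, ℬ s := hsup ▸ Submodule.mem_top
      refine Submodule.iSup_induction (motive := fun b => (y ⊗ₜ[ℂ] (1:B)) * (Δt x * (1 ⊗ₜ[ℂ] b)) =
        (TensorProduct.map (π (q⁻¹*p)).toLinearMap LinearMap.id)
          ((π (p⁻¹*q) y ⊗ₜ[ℂ] (1:B)) * (Coalgebra.comul (R := ℂ) x * (1 ⊗ₜ[ℂ] b))))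
        ℬ hb ?_ ?_ ?_
      · intro s b hbs
        rw [hΔt x s b hbs]
        have hwmem : Coalgebra.comul (R := ℂ) x * (1 ⊗ₜ[ℂ] b)
            ∈ tensorSub (ℬ (p⁻¹ * s⁻¹)) (ℬ s) := by
          rw [← hcograded₁ (p⁻¹ * s⁻¹) s]
          refine Submodule.subset_span ⟨x, ?_, b, hbs, rfl⟩
          rwa [show p⁻¹ * s⁻¹ * s = p⁻¹ by group]
        have step : (y ⊗ₜ[ℂ] (1:B)) *
            (TensorProduct.map (π s⁻¹).toLinearMap LinearMap.id
              (Coalgebra.comul (R := ℂ) x * (1 ⊗ₜ[ℂ] b))) =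
            (TensorProduct.map (π s⁻¹).toLinearMap LinearMap.id)
              ((π s y ⊗ₜ[ℂ] (1:B)) * (Coalgebra.comul (R := ℂ) x * (1 ⊗ₜ[ℂ] b))) := by
          conv_rhs => rw [tmap_mul]
          congr 1
          rw [TensorProduct.map_tmul]
          simp only [AlgEquiv.toLinearMap_apply, LinearMap.id_coe, id_eq]
          rw [hinv]
        rw [step]
        by_cases hs : s = p⁻¹ * q
        · subst hs
          rw [show (p⁻¹ * q : G)⁻¹ = q⁻¹ * p by group]
        · have h1 : (π s y ⊗ₜ[ℂ] (1:B)) * (Coalgebra.comul (R := ℂ) x * (1 ⊗ₜ[ℂ] b)) = 0 := by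
            refine mul_tensorSub_zero ℬ horth ?_ (hπmem s q⁻¹ y hy) _ hwmem
            intro h
            apply hs
            have h' := mul_right_cancel h
            rw [← h']; group
          have h2 : (π (p⁻¹*q) y ⊗ₜ[ℂ] (1:B)) *
              (Coalgebra.comul (R := ℂ) x * (1 ⊗ₜ[ℂ] b)) = 0 := by
            refine mul_tensorSub_zero ℬ horth ?_ (hπmem (p⁻¹*q) q⁻¹ y hy) _ hwmem
            intro h
            apply hs
            have h' : p⁻¹ * (q⁻¹ * p) = p⁻¹ * s⁻¹ := by rw [← h]; group
            have h'' := mul_left_cancel h'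
            rw [← inv_inv s, ← h'']; group
          rw [h1, h2, map_zero, map_zero]
      · simp
      · intro b₁ b₂ ih₁ ih₂
        simp only [TensorProduct.tmul_add, mul_add, map_add] at ih₁ ih₂ ⊢
        rw [ih₁, ih₂]
    have := main 1
    rwa [← Algebra.TensorProduct.one_def, mul_one, mul_one] at this
  constructor
  · -- first statement
    have hset : {z | ∃ x ∈ ℬ p⁻¹, ∃ y ∈ ℬ q⁻¹, z = Δt x * (1 ⊗ₜ[ℂ] y)} =
        (TensorProduct.map (π q).toLinearMap LinearMap.id) ''
          {z | ∃ a ∈ ℬ (p⁻¹ * q * q⁻¹), ∃ b ∈ ℬ q⁻¹,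
            z = (Coalgebra.comul (R := ℂ) a) * (1 ⊗ₜ[ℂ] b)} := by
      ext z
      simp only [Set.mem_setOf_eq, Set.mem_image]
      constructor
      · rintro ⟨x, hx, y, hy, rfl⟩
        refine ⟨Coalgebra.comul (R := ℂ) x * (1 ⊗ₜ[ℂ] y),
          ⟨x, ?_, y, hy, rfl⟩, ?_⟩
        · rwa [show p⁻¹ * q * q⁻¹ = p⁻¹ by group]
        · rw [hΔt x q⁻¹ y hy, inv_inv]
      · rintro ⟨_, ⟨a, ha, b, hb, rfl⟩, rfl⟩
        rw [show p⁻¹ * q * q⁻¹ = p⁻¹ by group] at ha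
        exact ⟨a, ha, b, hb, by rw [hΔt a q⁻¹ b hb, inv_inv]⟩
    rw [hset, Submodule.span_image, hcograded₁ (p⁻¹ * q) q⁻¹, tensorSub_map,
      hcross q (p⁻¹ * q), show q * (p⁻¹ * q) * q⁻¹ = q * p⁻¹ by group]
  · -- second statement
    have hset : {z | ∃ x ∈ ℬ p⁻¹, ∃ y ∈ ℬ q⁻¹, z = (y ⊗ₜ[ℂ] (1:B)) * Δt x} =
        (TensorProduct.map (π (q⁻¹*p)).toLinearMap LinearMap.id) ''
          {z | ∃ a ∈ ℬ (p⁻¹*q⁻¹*p * (p⁻¹*q)), ∃ b ∈ ℬ (p⁻¹*q⁻¹*p),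
            z = (b ⊗ₜ[ℂ] 1) * (Coalgebra.comul (R := ℂ) a)} := by
      ext z
      simp only [Set.mem_setOf_eq, Set.mem_image]
      constructor
      · rintro ⟨x, hx, y, hy, rfl⟩
        refine ⟨(π (p⁻¹*q) y ⊗ₜ[ℂ] 1) * Coalgebra.comul (R := ℂ) x,
          ⟨x, ?_, π (p⁻¹*q) y, ?_, rfl⟩, (key x hx y hy).symm⟩
        · rwa [show p⁻¹*q⁻¹*p * (p⁻¹*q) = p⁻¹ by group]
        · have := hπmem (p⁻¹*q) q⁻¹ y hy
          rwa [show (p⁻¹*q) * q⁻¹ * (p⁻¹*q)⁻¹ = p⁻¹*q⁻¹*p by group] at this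
      · rintro ⟨_, ⟨a, ha, c, hc, rfl⟩, rfl⟩
        rw [show p⁻¹*q⁻¹*p * (p⁻¹*q) = p⁻¹ by group] at ha
        have hy' : π (q⁻¹*p) c ∈ ℬ q⁻¹ := by
          have := hπmem (q⁻¹*p) (p⁻¹*q⁻¹*p) c hc
          rwa [show (q⁻¹*p) * (p⁻¹*q⁻¹*p) * (q⁻¹*p)⁻¹ = q⁻¹ by group] at this
        have hcc : π (p⁻¹*q) (π (q⁻¹*p) c) = c := by
          rw [show (p⁻¹*q : G) = (q⁻¹*p)⁻¹ by group]
          exact hinv _ c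
        refine ⟨a, ha, π (q⁻¹*p) c, hy', ?_⟩
        rw [key a ha _ hy', hcc]
    rw [hset, Submodule.span_image, hcograded₂ (p⁻¹*q⁻¹*p) (p⁻¹*q), tensorSub_map,
      hcross (q⁻¹*p) (p⁻¹*q⁻¹*p), show (q⁻¹*p) * (p⁻¹*q⁻¹*p) * (q⁻¹*p)⁻¹ = q⁻¹ by group]
end

section
/- Let π be a crossing of G on the G-cograded Hopf algebra B. Then each π_p also respects the deformed comultiplication: Δ̃(π_p(b)) = (π_p ⊗ π_p)(Δ̃(b)) for all b ∈ B, so π is again a crossing of G on B̃ = (B, Δ̃). Moreover the double deformation recovers the original structure: applying the deformation construction to (B̃, π) gives back Δ, i.e., Δ̃̃ = Δ. -/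
open TensorProduct

section Aux

variable {G : Type*} [Group G] [DecidableEq G] {B : Type*} [Ring B] [Algebra ℂ B]

/-- Every element of `B` is a finite sum of its "projections" `y * u q`. -/
lemma aux_decompose (ℬ : G → Submodule ℂ B)
    (hdec : DirectSum.IsInternal ℬ)
    (horth : ∀ p q : G, p ≠ q → ∀ a ∈ ℬ p, ∀ b ∈ ℬ q, a * b = 0)
    (u : G → B)
    (hu : ∀ p : G, u p ∈ ℬ p ∧ ∀ x ∈ ℬ p, u p * x = x ∧ x * u p = x)
    (y : B) :
    ∃ S : Finset G, y = ∑ q ∈ S, y * u q ∧ ∀ q ∉ S, y * u q = 0 := by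
  have hy : y ∈ ⨆ p, ℬ p := by
    rw [hdec.submodule_iSup_eq_top]; trivial
  refine Submodule.iSup_induction (motive := fun y : B =>
      ∃ S : Finset G, y = ∑ q ∈ S, y * u q ∧ ∀ q ∉ S, y * u q = 0) ℬ hy ?_ ?_ ?_
  · intro r x hx
    refine ⟨{r}, ?_, ?_⟩
    · rw [Finset.sum_singleton, ((hu r).2 x hx).2]
    · intro q hq
      exact horth r q (fun h => hq (by simp [h])) x hx (u q) (hu q).1
  · exact ⟨∅, by simp, fun q _ => zero_mul _⟩
  · rintro x y ⟨S₁, hx, hx'⟩ ⟨S₂, hy, hy'⟩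
    refine ⟨S₁ ∪ S₂, ?_, ?_⟩
    · have e1 : ∑ q ∈ S₁ ∪ S₂, x * u q = ∑ q ∈ S₁, x * u q :=
        (Finset.sum_subset Finset.subset_union_left
          (fun q _ hq => hx' q hq)).symm
      have e2 : ∑ q ∈ S₁ ∪ S₂, y * u q = ∑ q ∈ S₂, y * u q :=
        (Finset.sum_subset Finset.subset_union_right
          (fun q _ hq => hy' q hq)).symm
      simp only [add_mul, Finset.sum_add_distrib, e1, e2, ← hx, ← hy]
    · intro q hq
      rw [add_mul, hx' q (fun h => hq (Finset.mem_union_left _ h)),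
        hy' q (fun h => hq (Finset.mem_union_right _ h)), add_zero]

lemma aux_decompose_tensor (ℬ : G → Submodule ℂ B)
    (hdec : DirectSum.IsInternal ℬ)
    (horth : ∀ p q : G, p ≠ q → ∀ a ∈ ℬ p, ∀ b ∈ ℬ q, a * b = 0)
    (u : G → B)
    (hu : ∀ p : G, u p ∈ ℬ p ∧ ∀ x ∈ ℬ p, u p * x = x ∧ x * u p = x)
    (z : B ⊗[ℂ] B) :
    ∃ S : Finset G, z = ∑ q ∈ S, z * (1 ⊗ₜ[ℂ] u q) ∧
      ∀ q ∉ S, z * (1 ⊗ₜ[ℂ] u q) = 0 := by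
  induction z using TensorProduct.induction_on with
  | zero => exact ⟨∅, by simp, fun q _ => zero_mul _⟩
  | tmul x y =>
    obtain ⟨S, hS, hS'⟩ := aux_decompose ℬ hdec horth u hu y
    have key : ∀ q : G, (x ⊗ₜ[ℂ] y) * (1 ⊗ₜ[ℂ] u q) = x ⊗ₜ[ℂ] (y * u q) := by
      intro q
      rw [Algebra.TensorProduct.tmul_mul_tmul, mul_one]
    refine ⟨S, ?_, ?_⟩
    · simp only [key]
      rw [← TensorProduct.tmul_sum, ← hS]
    · intro q hq
      rw [key, hS' q hq, TensorProduct.tmul_zero]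
  | add z w hz hw =>
    obtain ⟨S₁, hx, hx'⟩ := hz
    obtain ⟨S₂, hy, hy'⟩ := hw
    refine ⟨S₁ ∪ S₂, ?_, ?_⟩
    · have e1 : ∑ q ∈ S₁ ∪ S₂, z * (1 ⊗ₜ[ℂ] u q) = ∑ q ∈ S₁, z * (1 ⊗ₜ[ℂ] u q) :=
        (Finset.sum_subset Finset.subset_union_left (fun q _ hq => hx' q hq)).symm
      have e2 : ∑ q ∈ S₁ ∪ S₂, w * (1 ⊗ₜ[ℂ] u q) = ∑ q ∈ S₂, w * (1 ⊗ₜ[ℂ] u q) :=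
        (Finset.sum_subset Finset.subset_union_right (fun q _ hq => hy' q hq)).symm
      simp only [add_mul, Finset.sum_add_distrib, e1, e2, ← hx, ← hy]
    · intro q hq
      rw [add_mul, hx' q (fun h => hq (Finset.mem_union_left _ h)),
        hy' q (fun h => hq (Finset.mem_union_right _ h)), add_zero]

/-- Separation: multiplying by the local units `1 ⊗ u q` separates points. -/
lemma aux_sep (ℬ : G → Submodule ℂ B)
    (hdec : DirectSum.IsInternal ℬ)
    (horth : ∀ p q : G, p ≠ q → ∀ a ∈ ℬ p, ∀ b ∈ ℬ q, a * b = 0)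
    (u : G → B)
    (hu : ∀ p : G, u p ∈ ℬ p ∧ ∀ x ∈ ℬ p, u p * x = x ∧ x * u p = x)
    (z z' : B ⊗[ℂ] B)
    (h : ∀ q : G, z * (1 ⊗ₜ[ℂ] u q) = z' * (1 ⊗ₜ[ℂ] u q)) : z = z' := by
  have h0 : ∀ q : G, (z - z') * (1 ⊗ₜ[ℂ] u q) = 0 := by
    intro q; rw [sub_mul, h q, sub_self]
  obtain ⟨S, hS, -⟩ := aux_decompose_tensor ℬ hdec horth u hu (z - z')
  have : z - z' = 0 := by rw [hS]; simp [h0]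
  exact sub_eq_zero.mp this

end Aux

/-- if `π` is a crossing of `G` on `B`, then each `π_p` respects
the deformed comultiplication (`Δ̃ ∘ π_p = (π_p ⊗ π_p) ∘ Δ̃`), so `π` is again a
crossing on `B̃ = (B, Δ̃)`; moreover the second deformation `Δ̃̃` (built from
`(B̃, Δ̃, π)` with the new grading `B̃_q = B_{q⁻¹}`) recovers `Δ`. -/
theorem crossing_double_deformation
    {G : Type*} [Group G] [DecidableEq G] {B : Type*} [Ring B] [HopfAlgebra ℂ B]
    (ℬ : G → Submodule ℂ B)
    (hdec : DirectSum.IsInternal ℬ)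
    (horth : ∀ p q : G, p ≠ q → ∀ a ∈ ℬ p, ∀ b ∈ ℬ q, a * b = 0)
    (hcograded₁ : ∀ p q : G,
      Submodule.span ℂ {z | ∃ a ∈ ℬ (p * q), ∃ b ∈ ℬ q,
        z = (Coalgebra.comul (R := ℂ) a) * (1 ⊗ₜ[ℂ] b)} = tensorSub (ℬ p) (ℬ q))
    (hcograded₂ : ∀ p q : G,
      Submodule.span ℂ {z | ∃ a ∈ ℬ (p * q), ∃ b ∈ ℬ p,
        z = (b ⊗ₜ[ℂ] 1) * (Coalgebra.comul (R := ℂ) a)} = tensorSub (ℬ p) (ℬ q))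
    -- the admissible action
    (π : G →* (B ≃ₐ[ℂ] B))
    (hπΔ : ∀ (p : G) (b : B), Coalgebra.comul (R := ℂ) (π p b) =
      (TensorProduct.map (π p).toLinearMap (π p).toLinearMap) (Coalgebra.comul (R := ℂ) b))
    (hcross : ∀ p q : G, (ℬ q).map (π p).toLinearMap = ℬ (p * q * p⁻¹))
    -- the deformed comultiplication
    (Δt : B →ₗ[ℂ] B ⊗[ℂ] B)
    (hΔt : ∀ (b : B) (q : G), ∀ b' ∈ ℬ q,
      Δt b * (1 ⊗ₜ[ℂ] b') = (TensorProduct.map (π q⁻¹).toLinearMap LinearMap.id)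
        (Coalgebra.comul (R := ℂ) b * (1 ⊗ₜ[ℂ] b')))
    -- each component has a local unit
    (u : G → B)
    (hu : ∀ p : G, u p ∈ ℬ p ∧ ∀ x ∈ ℬ p, u p * x = x ∧ x * u p = x)
    -- the second deformation, built from (B̃, Δ̃) with grading B̃_q = B_{q⁻¹}
    (Δtt : B →ₗ[ℂ] B ⊗[ℂ] B)
    (hΔtt : ∀ (b : B) (q : G), ∀ b' ∈ ℬ q⁻¹,
      Δtt b * (1 ⊗ₜ[ℂ] b') = (TensorProduct.map (π q⁻¹).toLinearMap LinearMap.id)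
        (Δt b * (1 ⊗ₜ[ℂ] b'))) :
    (∀ (p : G) (b : B),
      Δt (π p b) = (TensorProduct.map (π p).toLinearMap (π p).toLinearMap) (Δt b)) ∧
    Δtt = (Coalgebra.comul (R := ℂ) (A := B)) := by
  -- composition of the maps π on tensor products
  have hππ : ∀ a c : G, (π a).toLinearMap ∘ₗ (π c).toLinearMap = (π (a * c)).toLinearMap := by
    intro a c
    ext x
    simp [map_mul]
  have hcomp : ∀ (f₁ f₂ g₁ g₂ : B →ₗ[ℂ] B) (z : B ⊗[ℂ] B),
      TensorProduct.map f₁ g₁ (TensorProduct.map f₂ g₂ z) =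
      TensorProduct.map (f₁ ∘ₗ f₂) (g₁ ∘ₗ g₂) z := by
    intro f₁ f₂ g₁ g₂ z
    rw [TensorProduct.map_comp, LinearMap.comp_apply]
  -- each map (π a ⊗ π c) is multiplicative
  have hmul : ∀ (a c : G) (z w : B ⊗[ℂ] B),
      TensorProduct.map (π a).toLinearMap (π c).toLinearMap (z * w) =
      TensorProduct.map (π a).toLinearMap (π c).toLinearMap z *
      TensorProduct.map (π a).toLinearMap (π c).toLinearMap w := by
    intro a c z w
    have h : TensorProduct.map (π a).toLinearMap (π c).toLinearMap =
        (Algebra.TensorProduct.map (π a).toAlgHom (π c).toAlgHom).toLinearMap := by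
      apply TensorProduct.ext'
      intro x y
      rfl
    rw [h]
    simp only [AlgHom.toLinearMap_apply]
    exact map_mul _ _ _
  constructor
  · intro p b
    apply aux_sep ℬ hdec horth u hu
    intro q
    -- b'' = π p⁻¹ (u q) lies in ℬ (p⁻¹ * q * p⁻¹⁻¹)
    set b'' : B := π p⁻¹ (u q) with hb''
    have hb''mem : b'' ∈ ℬ (p⁻¹ * q * p⁻¹⁻¹) := by
      rw [← hcross p⁻¹ q]
      exact ⟨u q, (hu q).1, rfl⟩
    have hπb'' : π p b'' = u q := by
      rw [hb'']
      have : π p (π p⁻¹ (u q)) = (π p * π p⁻¹) (u q) := rfl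
      rw [this, ← map_mul, mul_inv_cancel, map_one]
      rfl
    have htens : TensorProduct.map (π p).toLinearMap (π p).toLinearMap
        ((1 : B) ⊗ₜ[ℂ] b'') = (1 : B) ⊗ₜ[ℂ] u q := by
      rw [TensorProduct.map_tmul]
      simp only [AlgEquiv.toLinearMap_apply, map_one, hπb'']
    -- LHS
    have lhs : Δt (π p b) * (1 ⊗ₜ[ℂ] u q) =
        TensorProduct.map (π (q⁻¹ * p)).toLinearMap (π p).toLinearMap
          (Coalgebra.comul (R := ℂ) b * (1 ⊗ₜ[ℂ] b'')) := by
      rw [hΔt (π p b) q (u q) (hu q).1, hπΔ p b, ← htens, ← hmul, hcomp,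
        LinearMap.id_comp, hππ]
    -- RHS
    have rhs : TensorProduct.map (π p).toLinearMap (π p).toLinearMap (Δt b) *
        (1 ⊗ₜ[ℂ] u q) =
        TensorProduct.map (π (p * (p⁻¹ * q * p⁻¹⁻¹)⁻¹)).toLinearMap (π p).toLinearMap
          (Coalgebra.comul (R := ℂ) b * (1 ⊗ₜ[ℂ] b'')) := by
      rw [← htens, ← hmul, hΔt b (p⁻¹ * q * p⁻¹⁻¹) b'' hb''mem, hcomp,
        LinearMap.comp_id, hππ]
    rw [lhs, rhs]
    congr 2
    group
  · ext b
    apply aux_sep ℬ hdec horth u hu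
    intro q
    have hmem : u q ∈ ℬ q⁻¹⁻¹ := by rw [inv_inv]; exact (hu q).1
    have h1 : Δtt b * (1 ⊗ₜ[ℂ] u q) =
        (TensorProduct.map (π q⁻¹⁻¹).toLinearMap LinearMap.id)
          (Δt b * (1 ⊗ₜ[ℂ] u q)) := hΔtt b q⁻¹ (u q) hmem
    rw [h1, hΔt b q (u q) (hu q).1, hcomp, hππ, LinearMap.id_comp, inv_inv,
      mul_inv_cancel]
    have : (π (1 : G)).toLinearMap = LinearMap.id := by
      ext x; simp
    rw [this, TensorProduct.map_id, LinearMap.id_apply]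
end
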